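/- arXiv:cs/0410045 — 6 statements merged into one kernel-verified Lean document; each statement's English description precedes it below -/
import Mathlib

section
/- If the weight matrix [A_I, A_B] satisfies A_I e_I + A_B e_B = 0, A_I x_I + A_B x_B = 0, and A_I y_I + A_B y_B = 0 (affine-combination conditions), A_I is nonsingular, and the deformed boundary coordinates are given by an affine map (x̂_j, ŷ_j)ᵀ = L(x_j, y_j)ᵀ + v for a nonsingular 2×2 matrix L and vector v applied to each boundary node j, then the interior coordinates computed by solving A_I[x̂_I, ŷ_I] = -A_B[x̂_B, ŷ_B] satisfy (x̂_i, ŷ_i)ᵀ = L(x_i, y_i)ᵀ + v for every interior node i. -/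
open Matrix

/-- Exactness of LWLS methods for affine boundary transformations:
if the weights express interior nodes as affine combinations of neighbors,
`A_I` is nonsingular, and the boundary deformation is the affine map
`p ↦ L p + v`, then the computed interior deformation agrees with the same
affine map applied to each interior node. -/
theorem lwls_exact_for_affine
    (m b : ℕ)
    (AI : Matrix (Fin m) (Fin m) ℝ) (AB : Matrix (Fin m) (Fin b) ℝ)
    (xI yI : Fin m → ℝ) (xB yB : Fin b → ℝ)
    (hones : AI *ᵥ (fun _ => (1:ℝ)) + AB *ᵥ (fun _ => (1:ℝ)) = 0)
    (hx : AI *ᵥ xI + AB *ᵥ xB = 0)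
    (hy : AI *ᵥ yI + AB *ᵥ yB = 0)
    (hAI : IsUnit AI.det)
    (L : Matrix (Fin 2) (Fin 2) ℝ) (hL : IsUnit L.det) (v : Fin 2 → ℝ)
    (xhB yhB : Fin b → ℝ)
    (hbx : ∀ j, xhB j = L 0 0 * xB j + L 0 1 * yB j + v 0)
    (hby : ∀ j, yhB j = L 1 0 * xB j + L 1 1 * yB j + v 1)
    (xhI yhI : Fin m → ℝ)
    (hsolx : AI *ᵥ xhI = -(AB *ᵥ xhB))
    (hsoly : AI *ᵥ yhI = -(AB *ᵥ yhB)) :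
    ∀ i, xhI i = L 0 0 * xI i + L 0 1 * yI i + v 0 ∧
         yhI i = L 1 0 * xI i + L 1 1 * yI i + v 1 := by
  have hinj : Function.Injective (AI.mulVec) := mulVec_injective_iff_isUnit.mpr ((isUnit_iff_isUnit_det AI).mpr hAI)
  have key : ∀ (c d e : ℝ) (zB : Fin b → ℝ) (zI : Fin m → ℝ),
      (∀ j, zB j = c * xB j + d * yB j + e) →
      AI *ᵥ zI = -(AB *ᵥ zB) →
      zI = fun i => c * xI i + d * yI i + e := by
    intro c d e zB zI hzB hsol
    apply hinj
    rw [hsol]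
    have hzB' : zB = c • xB + d • yB + e • (fun _ => (1:ℝ)) := by
      funext j; simp [hzB j, smul_eq_mul]
    have hzI : (fun i => c * xI i + d * yI i + e)
        = c • xI + d • yI + e • (fun _ => (1:ℝ)) := by
      funext i; simp [smul_eq_mul]
    rw [hzI, hzB']
    have hx' : AI *ᵥ xI = -(AB *ᵥ xB) := eq_neg_of_add_eq_zero_left hx
    have hy' : AI *ᵥ yI = -(AB *ᵥ yB) := eq_neg_of_add_eq_zero_left hy
    have h1' : AI *ᵥ (fun _ => (1:ℝ)) = -(AB *ᵥ (fun _ => (1:ℝ))) :=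
      eq_neg_of_add_eq_zero_left hones
    simp only [mulVec_add, mulVec_smul, hx', hy', h1']
    module
  have kx := key (L 0 0) (L 0 1) (v 0) xhB xhI hbx hsolx
  have ky := key (L 1 0) (L 1 1) (v 1) yhB yhI hby hsoly
  intro i
  exact ⟨congrFun kx i, congrFun ky i⟩
end

section
/- If A_I is an irreducibly diagonally dominant matrix, then the Gauss–Seidel iteration for solving A_I X = B converges for any initial guess (the spectral radius of the Gauss–Seidel iteration matrix is strictly less than 1). -/
open Matrix Filter Finset

/-- A square matrix is irreducible if the directed graph with an edge `i → j`
whenever `A i j ≠ 0` is strongly connected. -/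
def MatrixIrreducible {n : ℕ} (A : Matrix (Fin n) (Fin n) ℝ) : Prop :=
  ∀ i j : Fin n, i ≠ j → Relation.TransGen (fun a b => A a b ≠ 0) i j

/-- The lower-plus-diagonal part `D + L` of a square matrix. -/
def lowerDiagPart {n : ℕ} (A : Matrix (Fin n) (Fin n) ℝ) : Matrix (Fin n) (Fin n) ℝ :=
  Matrix.of fun i j => if j ≤ i then A i j else 0

/-- The strictly upper part `U` of a square matrix. -/
def upperPart {n : ℕ} (A : Matrix (Fin n) (Fin n) ℝ) : Matrix (Fin n) (Fin n) ℝ :=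
  Matrix.of fun i j => if i < j then A i j else 0

attribute [local instance] Matrix.linftyOpNormedRing Matrix.linftyOpNormedAlgebra

lemma taussky_det_ne_zero {n : ℕ} (C : Matrix (Fin n) (Fin n) ℂ)
    (hirr : ∀ i j : Fin n, i ≠ j → Relation.TransGen (fun a b => C a b ≠ 0) i j)
    (hdom : ∀ i, ∑ j ∈ Finset.univ.erase i, ‖C i j‖ ≤ ‖C i i‖)
    (hstrict : ∃ i, ∑ j ∈ Finset.univ.erase i, ‖C i j‖ < ‖C i i‖) :
    C.det ≠ 0 := by
  intro hdet
  obtain ⟨v, hv, hCv⟩ := (Matrix.exists_mulVec_eq_zero_iff).2 hdet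
  have hne : (Finset.univ : Finset (Fin n)).Nonempty := ⟨hstrict.choose, Finset.mem_univ _⟩
  obtain ⟨i₀, -, hi₀⟩ := Finset.exists_max_image Finset.univ (fun i => ‖v i‖) hne
  set m := ‖v i₀‖ with hm
  have hmax : ∀ j, ‖v j‖ ≤ m := fun j => hi₀ j (Finset.mem_univ j)
  have hmpos : 0 < m := by
    obtain ⟨i, hi⟩ := Function.ne_iff.1 hv
    exact lt_of_lt_of_le (norm_pos_iff.2 hi) (hmax i)
  -- key step
  have key : ∀ i, ‖v i‖ = m →
      (∀ j, C i j ≠ 0 → ‖v j‖ = m) ∧ ∑ j ∈ Finset.univ.erase i, ‖C i j‖ = ‖C i i‖ := by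
    intro i hvi
    have hrow : ∑ j, C i j * v j = 0 := congrFun hCv i
    have hsplit : C i i * v i + ∑ j ∈ Finset.univ.erase i, C i j * v j = 0 := by
      rw [Finset.add_sum_erase _ (fun j => C i j * v j) (Finset.mem_univ i)]
      exact hrow
    have hCiv : C i i * v i = -∑ j ∈ Finset.univ.erase i, C i j * v j :=
      eq_neg_of_add_eq_zero_left hsplit
    have heq : ‖C i i‖ * m = ‖∑ j ∈ Finset.univ.erase i, C i j * v j‖ := by
      rw [← hvi, ← norm_mul, hCiv, norm_neg]
    have h1 : ‖∑ j ∈ Finset.univ.erase i, C i j * v j‖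
        ≤ ∑ j ∈ Finset.univ.erase i, ‖C i j‖ * ‖v j‖ := by
      refine (norm_sum_le _ _).trans_eq ?_
      exact Finset.sum_congr rfl fun j _ => norm_mul _ _
    have h2 : ∑ j ∈ Finset.univ.erase i, ‖C i j‖ * ‖v j‖
        ≤ ∑ j ∈ Finset.univ.erase i, ‖C i j‖ * m :=
      Finset.sum_le_sum fun j _ => mul_le_mul_of_nonneg_left (hmax j) (norm_nonneg _)
    have h3 : ∑ j ∈ Finset.univ.erase i, ‖C i j‖ * m ≤ ‖C i i‖ * m := by
      rw [← Finset.sum_mul]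
      exact mul_le_mul_of_nonneg_right (hdom i) hmpos.le
    have e2 : ∑ j ∈ Finset.univ.erase i, ‖C i j‖ * ‖v j‖
        = ∑ j ∈ Finset.univ.erase i, ‖C i j‖ * m := le_antisymm h2 (by linarith)
    have e3 : ∑ j ∈ Finset.univ.erase i, ‖C i j‖ * m = ‖C i i‖ * m := le_antisymm h3 (by linarith)
    constructor
    · intro j hCj
      by_cases hji : j = i
      · rw [hji, hvi]
      · have hterm := (Finset.sum_eq_sum_iff_of_le
          (fun j _ => mul_le_mul_of_nonneg_left (hmax j) (norm_nonneg (C i j)))).1 e2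
          j (Finset.mem_erase.2 ⟨hji, Finset.mem_univ j⟩)
        exact mul_left_cancel₀ (norm_ne_zero_iff.2 hCj) hterm
    · have := e3
      rw [← Finset.sum_mul] at this
      exact mul_right_cancel₀ hmpos.ne' this
  -- all coordinates have norm m
  have hall : ∀ j, ‖v j‖ = m := by
    intro j
    by_cases hj : j = i₀
    · rw [hj]
    · have htg := hirr i₀ j (Ne.symm hj)
      clear hj
      induction htg with
      | single h => exact (key i₀ rfl).1 _ h
      | tail _ h ih => exact (key _ ih).1 _ h
  obtain ⟨i, hi⟩ := hstrict
  exact absurd ((key i (hall i)).2) (ne_of_lt hi)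

lemma pow_tendsto_zero_of_spectralRadius_lt_one {A : Type*} [NormedRing A]
    [NormedAlgebra ℂ A] [CompleteSpace A] [NormOneClass A] (a : A)
    (h : spectralRadius ℂ a < 1) :
    Tendsto (fun k : ℕ => ‖a ^ k‖) atTop (nhds 0) := by
  obtain ⟨c, hc1, hc2⟩ := ENNReal.lt_iff_exists_nnreal_btwn.1 h
  have hgel := spectrum.pow_nnnorm_pow_one_div_tendsto_nhds_spectralRadius a
  have hev : ∀ᶠ k : ℕ in atTop, (‖a ^ k‖₊ : ENNReal) ^ (1 / (k : ℝ)) < (c : ENNReal) :=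
    hgel.eventually_lt_const hc1
  have hev2 : ∀ᶠ k : ℕ in atTop, ‖a ^ k‖ ≤ (c : ℝ) ^ k := by
    filter_upwards [hev, Filter.eventually_ge_atTop 1] with k hk hk1
    have hkne : (1 / (k : ℝ)) ≠ 0 := by positivity
    have : ((‖a ^ k‖₊ : ENNReal) ^ (1 / (k : ℝ))) ^ (k : ℝ) < ((c : ENNReal)) ^ (k : ℝ) :=
      ENNReal.rpow_lt_rpow hk (by positivity)
    rw [← ENNReal.rpow_mul, one_div,
      inv_mul_cancel₀ (by positivity : (k : ℝ) ≠ 0), ENNReal.rpow_one,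
      ENNReal.rpow_natCast] at this
    rw [← ENNReal.coe_pow, ENNReal.coe_lt_coe] at this
    exact_mod_cast this.le
  have hc2' : (c : ℝ) < 1 := by exact_mod_cast hc2
  have hpow : Tendsto (fun k : ℕ => (c : ℝ) ^ k) atTop (nhds 0) :=
    tendsto_pow_atTop_nhds_zero_of_lt_one c.coe_nonneg hc2'
  exact squeeze_zero' (Filter.Eventually.of_forall fun k => norm_nonneg _) hev2 hpow

/-- If `A` is irreducibly diagonally dominant, then the Gauss–Seidel iteration
for `A X = B` converges from any initial guess; the spectral radius of the
Gauss–Seidel iteration matrix `-(D+L)⁻¹ U` is strictly less than 1. -/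
theorem gaussSeidel_converges_of_irreducibly_diagonally_dominant
    (n : ℕ) (A : Matrix (Fin n) (Fin n) ℝ)
    (hirr : MatrixIrreducible A)
    (hdom : ∀ i, ∑ j ∈ Finset.univ.erase i, |A i j| ≤ |A i i|)
    (hstrict : ∃ i, ∑ j ∈ Finset.univ.erase i, |A i j| < |A i i|)
    (B X0 : Fin n → ℝ)
    (X : ℕ → Fin n → ℝ)
    (hX0 : X 0 = X0)
    (hXrec : ∀ k, X (k + 1) = (lowerDiagPart A)⁻¹ *ᵥ (B - upperPart A *ᵥ X k)) :
    Tendsto X atTop (nhds (A⁻¹ *ᵥ B)) ∧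
    (∀ μ : ℂ, μ ∈ spectrum ℂ ((-((lowerDiagPart A)⁻¹ * upperPart A)).map (fun x : ℝ => (x : ℂ))) →
      ‖μ‖ < 1) := by
  obtain ⟨i₀, hi₀⟩ := hstrict
  haveI : NeZero n := ⟨i₀.pos.ne'⟩
  set L := lowerDiagPart A with hL
  set U := upperPart A with hU
  have hLU : L + U = A := by
    ext i j
    simp only [hL, hU, lowerDiagPart, upperPart, Matrix.add_apply, Matrix.of_apply]
    rcases le_or_gt j i with h | h
    · rw [if_pos h, if_neg (not_lt.2 h), add_zero]
    · rw [if_neg (not_le.2 h), if_pos h, zero_add]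
  have hLij : ∀ i j : Fin n, L i j = if j ≤ i then A i j else 0 := fun i j => rfl
  have hUij : ∀ i j : Fin n, U i j = if i < j then A i j else 0 := fun i j => rfl
  have hdiag0 : A i₀ i₀ ≠ 0 := by
    intro h
    have hnn : 0 ≤ ∑ j ∈ Finset.univ.erase i₀, |A i₀ j| :=
      Finset.sum_nonneg fun j _ => abs_nonneg _
    rw [h, abs_zero] at hi₀
    exact absurd hi₀ (not_lt.2 hnn)
  have hdiag : ∀ i, A i i ≠ 0 := by
    intro i hAii
    have hsum : ∑ j ∈ Finset.univ.erase i, |A i j| = 0 :=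
      le_antisymm (by simpa [hAii] using hdom i) (Finset.sum_nonneg fun j _ => abs_nonneg _)
    have hrow : ∀ j, A i j = 0 := by
      intro j
      by_cases hj : j = i
      · rw [hj]; exact hAii
      · exact abs_eq_zero.1 ((Finset.sum_eq_zero_iff_of_nonneg
          (fun j _ => abs_nonneg _)).1 hsum j (Finset.mem_erase.2 ⟨hj, Finset.mem_univ _⟩))
    have hii₀ : i ≠ i₀ := fun h => hdiag0 (h ▸ hAii)
    obtain ⟨c, hc, -⟩ := Relation.TransGen.head'_iff.1 (hirr i i₀ hii₀)
    exact hc (hrow c)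
  -- determinant of L
  have hdetL : L.det = ∏ i, A i i := by
    have ht : L.BlockTriangular OrderDual.toDual := by
      intro i j h
      rw [hLij, if_neg (not_le.2 (OrderDual.toDual_lt_toDual.1 h))]
    rw [Matrix.det_of_lowerTriangular L ht]
    exact Finset.prod_congr rfl fun i _ => by rw [hLij, if_pos le_rfl]
  have hdetLne : L.det ≠ 0 := by
    rw [hdetL]; exact Finset.prod_ne_zero_iff.2 fun i _ => hdiag i
  -- complex lifting helpers
  have hmappow : ∀ (M : Matrix (Fin n) (Fin n) ℝ) (k : ℕ),
      (M.map (fun x : ℝ => (x : ℂ))) ^ k = (M ^ k).map (fun x : ℝ => (x : ℂ)) := by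
    intro M k
    show (Complex.ofRealHom.mapMatrix M) ^ k = Complex.ofRealHom.mapMatrix (M ^ k)
    rw [map_pow]
  have hmapmul : ∀ (M N : Matrix (Fin n) (Fin n) ℝ),
      (M.map (fun x : ℝ => (x : ℂ))) * (N.map (fun x : ℝ => (x : ℂ)))
        = (M * N).map (fun x : ℝ => (x : ℂ)) := by
    intro M N
    exact (_root_.map_mul Complex.ofRealHom.mapMatrix M N).symm
  have hmapdet : ∀ M : Matrix (Fin n) (Fin n) ℝ,
      (M.map (fun x : ℝ => (x : ℂ))).det = (M.det : ℂ) := by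
    intro M
    show (Complex.ofRealHom.mapMatrix M).det = _
    rw [← RingHom.map_det]
    rfl
  have hmapnorm : ∀ (M : Matrix (Fin n) (Fin n) ℝ) (i j : Fin n),
      ‖(M.map (fun x : ℝ => (x : ℂ))) i j‖ = |M i j| := by
    intro M i j
    simp [Matrix.map_apply, Complex.norm_real, Real.norm_eq_abs]
  -- A is invertible
  have hdetA : A.det ≠ 0 := by
    intro h
    refine taussky_det_ne_zero (A.map (fun x : ℝ => (x : ℂ))) ?_ ?_ ?_ ?_
    · intro i j hij
      exact Relation.TransGen.mono (fun a b hab => by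
        simpa [Matrix.map_apply] using Complex.ofReal_ne_zero.2 hab) _ _ (hirr i j hij)
    · intro i
      simp only [hmapnorm]
      exact hdom i
    · exact ⟨i₀, by simp only [hmapnorm]; exact hi₀⟩
    · rw [hmapdet, h, Complex.ofReal_zero]
  -- spectrum bound
  have hspec : ∀ μ : ℂ,
      μ ∈ spectrum ℂ ((-(L⁻¹ * U)).map (fun x : ℝ => (x : ℂ))) → ‖μ‖ < 1 := by
    intro μ hμ
    by_contra hge
    push_neg at hge
    have hμ0 : μ ≠ 0 := by
      intro h; rw [h, norm_zero] at hge; linarith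
    have hμpos : (0:ℝ) < ‖μ‖ := norm_pos_iff.2 hμ0
    set Gc := (-(L⁻¹ * U)).map (fun x : ℝ => (x : ℂ)) with hGc
    set Lc := L.map (fun x : ℝ => (x : ℂ)) with hLcdef
    set Uc := U.map (fun x : ℝ => (x : ℂ)) with hUcdef
    set C := μ • Lc + Uc with hCdef
    have hdet0 : (algebraMap ℂ (Matrix (Fin n) (Fin n) ℂ) μ - Gc).det = 0 := by
      by_contra hne
      exact (spectrum.mem_iff.1 hμ)
        ((Matrix.isUnit_iff_isUnit_det _).2 (isUnit_iff_ne_zero.2 hne))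
    have hfact : Lc * (algebraMap ℂ (Matrix (Fin n) (Fin n) ℂ) μ - Gc) = C := by
      rw [mul_sub]
      have h1 : Lc * algebraMap ℂ (Matrix (Fin n) (Fin n) ℂ) μ = μ • Lc := by
        rw [Algebra.algebraMap_eq_smul_one, mul_smul_comm, mul_one]
      have h2 : Lc * Gc = -Uc := by
        rw [hLcdef, hGc, hmapmul]
        have : L * -(L⁻¹ * U) = -U := by
          rw [Matrix.mul_neg, ← Matrix.mul_assoc,
            Matrix.mul_nonsing_inv _ (isUnit_iff_ne_zero.2 hdetLne), Matrix.one_mul]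
        rw [this, hUcdef]
        ext i j
        simp [Matrix.map_apply]
      rw [h1, h2, hCdef, sub_neg_eq_add]
    have hdetC : C.det = 0 := by
      rw [← hfact, Matrix.det_mul, hdet0, mul_zero]
    -- entries of C
    have hCij : ∀ i j : Fin n, C i j = if j ≤ i then μ * (A i j : ℂ) else (A i j : ℂ) := by
      intro i j
      rw [hCdef]
      simp only [Matrix.add_apply, Matrix.smul_apply, smul_eq_mul, hLcdef, hUcdef,
        Matrix.map_apply, hLij, hUij]
      rcases le_or_gt j i with h | h
      · rw [if_pos h, if_pos h, if_neg (not_lt.2 h)]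
        push_cast
        ring
      · rw [if_neg (not_le.2 h), if_neg (not_le.2 h), if_pos h]
        push_cast
        ring
    have hCnorm : ∀ i j : Fin n, ‖C i j‖ = if j ≤ i then ‖μ‖ * |A i j| else |A i j| := by
      intro i j
      rw [hCij]
      split_ifs with h
      · rw [norm_mul, Complex.norm_real, Real.norm_eq_abs]
      · rw [Complex.norm_real, Real.norm_eq_abs]
    have hCdiag : ∀ i : Fin n, ‖C i i‖ = ‖μ‖ * |A i i| := by
      intro i
      rw [hCnorm, if_pos le_rfl]
    have hCle : ∀ i j : Fin n, ‖C i j‖ ≤ ‖μ‖ * |A i j| := by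
      intro i j
      rw [hCnorm]
      split_ifs with h
      · exact le_rfl
      · exact le_mul_of_one_le_left (abs_nonneg _) hge
    refine taussky_det_ne_zero C ?_ ?_ ⟨i₀, ?_⟩ hdetC
    · intro i j hij
      refine Relation.TransGen.mono (fun a b hab => ?_) _ _ (hirr i j hij)
      rw [hCij]
      split_ifs
      · exact mul_ne_zero hμ0 (Complex.ofReal_ne_zero.2 hab)
      · exact Complex.ofReal_ne_zero.2 hab
    · intro i
      calc ∑ j ∈ Finset.univ.erase i, ‖C i j‖
          ≤ ∑ j ∈ Finset.univ.erase i, ‖μ‖ * |A i j| :=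
            Finset.sum_le_sum fun j _ => hCle i j
        _ = ‖μ‖ * ∑ j ∈ Finset.univ.erase i, |A i j| := by rw [Finset.mul_sum]
        _ ≤ ‖μ‖ * |A i i| := mul_le_mul_of_nonneg_left (hdom i) (norm_nonneg μ)
        _ = ‖C i i‖ := (hCdiag i).symm
    · calc ∑ j ∈ Finset.univ.erase i₀, ‖C i₀ j‖
          ≤ ∑ j ∈ Finset.univ.erase i₀, ‖μ‖ * |A i₀ j| :=
            Finset.sum_le_sum fun j _ => hCle i₀ j
        _ = ‖μ‖ * ∑ j ∈ Finset.univ.erase i₀, |A i₀ j| := by rw [Finset.mul_sum]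
        _ < ‖μ‖ * |A i₀ i₀| := by exact mul_lt_mul_of_pos_left hi₀ hμpos
        _ = ‖C i₀ i₀‖ := (hCdiag i₀).symm
  -- spectral radius < 1 and powers tend to zero
  set Mc := (-(L⁻¹ * U)).map (fun x : ℝ => (x : ℂ)) with hMcdef
  have hsr : spectralRadius ℂ Mc < 1 := by
    have h := spectrum.spectralRadius_lt_of_forall_lt (a := Mc) (r := 1)
      (fun z hz => by exact_mod_cast hspec z hz)
    simpa using h
  have hpow := pow_tendsto_zero_of_spectralRadius_lt_one Mc hsr
  -- entrywise bound
  have hentry : ∀ (k : ℕ) (i j : Fin n), |((-(L⁻¹ * U)) ^ k) i j| ≤ ‖Mc ^ k‖ := by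
    intro k i j
    have h1 : ‖(Mc ^ k) i j‖₊ ≤ ‖Mc ^ k‖₊ := by
      rw [Matrix.linfty_opNNNorm_def]
      exact (Finset.single_le_sum (f := fun j' => ‖(Mc ^ k) i j'‖₊)
        (fun _ _ => zero_le) (Finset.mem_univ j)).trans
        (Finset.le_sup (f := fun i => ∑ j : Fin n, ‖(Mc ^ k) i j‖₊) (Finset.mem_univ i))
    have h2 : ‖(Mc ^ k) i j‖ ≤ ‖Mc ^ k‖ := h1
    calc |((-(L⁻¹ * U)) ^ k) i j| = ‖(Mc ^ k) i j‖ := by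
          rw [hMcdef, hmappow, hmapnorm]
      _ ≤ ‖Mc ^ k‖ := h2
  -- fixed point
  set Xs := A⁻¹ *ᵥ B with hXsdef
  have hAXs : A *ᵥ Xs = B := by
    rw [hXsdef, Matrix.mulVec_mulVec,
      Matrix.mul_nonsing_inv _ (isUnit_iff_ne_zero.2 hdetA), Matrix.one_mulVec]
  have hfix : Xs = L⁻¹ *ᵥ (B - U *ᵥ Xs) := by
    have h1 : L *ᵥ Xs = B - U *ᵥ Xs := by
      have h2 : (L + U) *ᵥ Xs = B := by rw [hLU]; exact hAXs
      rw [Matrix.add_mulVec] at h2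
      exact eq_sub_of_add_eq h2
    rw [← h1, Matrix.mulVec_mulVec,
      Matrix.nonsing_inv_mul _ (isUnit_iff_ne_zero.2 hdetLne), Matrix.one_mulVec]
  have herr : ∀ k, X k - Xs = ((-(L⁻¹ * U)) ^ k) *ᵥ (X 0 - Xs) := by
    intro k
    induction k with
    | zero => rw [pow_zero, Matrix.one_mulVec]
    | succ k ih =>
      have step : X (k + 1) - Xs = (-(L⁻¹ * U)) *ᵥ (X k - Xs) := by
        calc X (k + 1) - Xs
            = L⁻¹ *ᵥ (B - U *ᵥ X k) - L⁻¹ *ᵥ (B - U *ᵥ Xs) := by rw [hXrec k, ← hfix]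
          _ = L⁻¹ *ᵥ ((B - U *ᵥ X k) - (B - U *ᵥ Xs)) := (Matrix.mulVec_sub _ _ _).symm
          _ = L⁻¹ *ᵥ (U *ᵥ Xs - U *ᵥ X k) := by congr 1; abel
          _ = L⁻¹ *ᵥ (U *ᵥ (Xs - X k)) := by
              have hsub : U *ᵥ (Xs - X k) = U *ᵥ Xs - U *ᵥ X k := Matrix.mulVec_sub _ _ _
              rw [hsub]
          _ = (L⁻¹ * U) *ᵥ (Xs - X k) := Matrix.mulVec_mulVec _ _ _
          _ = (L⁻¹ * U) *ᵥ (-(X k - Xs)) := by rw [neg_sub]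
          _ = (-(L⁻¹ * U)) *ᵥ (X k - Xs) := by
              rw [Matrix.mulVec_neg, Matrix.neg_mulVec]
      rw [step, ih, Matrix.mulVec_mulVec, ← pow_succ']
  -- conclusion
  refine ⟨?_, hspec⟩
  rw [tendsto_pi_nhds]
  intro i
  rw [← tendsto_sub_nhds_zero_iff]
  have hb : ∀ k, |X k i - Xs i| ≤ ‖Mc ^ k‖ * ∑ j, |X 0 j - Xs j| := by
    intro k
    have h1 : X k i - Xs i = ∑ j, ((-(L⁻¹ * U)) ^ k) i j * (X 0 j - Xs j) := by
      have h2 := congrFun (herr k) i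
      simpa [Matrix.mulVec, dotProduct, Pi.sub_apply] using h2
    rw [h1]
    calc |∑ j, ((-(L⁻¹ * U)) ^ k) i j * (X 0 j - Xs j)|
        ≤ ∑ j, |((-(L⁻¹ * U)) ^ k) i j * (X 0 j - Xs j)| :=
          Finset.abs_sum_le_sum_abs _ _
      _ ≤ ∑ j, ‖Mc ^ k‖ * |X 0 j - Xs j| := Finset.sum_le_sum fun j _ => by
            rw [abs_mul]
            exact mul_le_mul_of_nonneg_right (hentry k i j) (abs_nonneg _)
      _ = ‖Mc ^ k‖ * ∑ j, |X 0 j - Xs j| := by rw [Finset.mul_sum]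
  have hg : Tendsto (fun k => ‖Mc ^ k‖ * ∑ j, |X 0 j - Xs j|) atTop (nhds 0) := by
    simpa using hpow.mul_const (∑ j, |X 0 j - Xs j|)
  exact squeeze_zero_norm hb hg
end

section
/- Let f: Ω → ℝ² be C² on a domain Ω ⊆ ℝ² with ∇f nonsingular everywhere and ∇f orientation-preserving (positive Jacobian determinant). Let T ⊆ Ω be a triangle with vertices v₁, v₂, v₃ listed in positive orientation, with maximum side length h, minimum altitude minalt(T), and aspect ratio asp(T) = h / minalt(T). Let M be an upper bound for ‖∇²f‖ on T. If σ_min(∇f(v₁)) / M > 2 h · asp(T), then the triangle with vertices f(v₁), f(v₂), f(v₃) is also positively oriented (not reversed). -/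
noncomputable section

abbrev E2 : Type := EuclideanSpace ℝ (Fin 2)

/-- Smallest singular value of a continuous linear map on `ℝ²`:
the infimum of `‖B x‖` over unit vectors `x`. -/
def sminCLM (B : E2 →L[ℝ] E2) : ℝ :=
  sInf {r : ℝ | ∃ x : E2, ‖x‖ = 1 ∧ r = ‖B x‖}

/-- Orientation determinant `det (v₂ − v₁, v₃ − v₁)` of a triangle. -/
def triDet (v₁ v₂ v₃ : E2) : ℝ :=
  (v₂ - v₁) 0 * (v₃ - v₁) 1 - (v₂ - v₁) 1 * (v₃ - v₁) 0

/-- Maximum side length of a triangle. -/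
def maxSide (v₁ v₂ v₃ : E2) : ℝ :=
  max (dist v₁ v₂) (max (dist v₂ v₃) (dist v₁ v₃))

/-- Minimum altitude of a triangle: the least distance from a vertex to the
affine span of the opposite edge. -/
def minAlt (v₁ v₂ v₃ : E2) : ℝ :=
  min (Metric.infDist v₁ (affineSpan ℝ {v₂, v₃} : Set E2))
    (min (Metric.infDist v₂ (affineSpan ℝ {v₁, v₃} : Set E2))
      (Metric.infDist v₃ (affineSpan ℝ {v₁, v₂} : Set E2)))

/-- Aspect ratio: maximum side length divided by minimum altitude. -/
def aspectRatio (v₁ v₂ v₃ : E2) : ℝ := maxSide v₁ v₂ v₃ / minAlt v₁ v₂ v₃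

set_option maxHeartbeats 1600000

namespace NoRev

/-- Planar cross product. -/
def dd (u w : E2) : ℝ := u 0 * w 1 - u 1 * w 0

lemma nsq (u : E2) : ‖u‖ ^ 2 = u 0 ^ 2 + u 1 ^ 2 := by
  rw [EuclideanSpace.norm_eq, Real.sq_sqrt (by positivity)]
  simp [Fin.sum_univ_two, Real.norm_eq_abs, sq_abs]

lemma abs_dd_le (u w : E2) : |dd u w| ≤ ‖u‖ * ‖w‖ := by
  have h1 := nsq u
  have h2 := nsq w
  have hn1 : (0:ℝ) ≤ ‖u‖ := norm_nonneg _
  have hn2 : (0:ℝ) ≤ ‖w‖ := norm_nonneg _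
  rw [abs_le]
  constructor <;> [skip; skip] <;>
  · unfold dd
    nlinarith [sq_nonneg (u 0 * w 0 + u 1 * w 1), sq_nonneg (‖u‖ - ‖w‖),
      sq_nonneg (‖u‖ + ‖w‖), mul_nonneg hn1 hn2, sq_nonneg (u 0 * w 1 - u 1 * w 0),
      sq_nonneg (u 0 * w 1 + u 1 * w 0)]

lemma coords (u : E2) :
    u = u 0 • (EuclideanSpace.single 0 1 : E2) + u 1 • (EuclideanSpace.single 1 1 : E2) := by
  ext i
  fin_cases i <;>
    simp [EuclideanSpace.single_apply, PiLp.add_apply, PiLp.smul_apply]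

lemma apply_coord (B : E2 →L[ℝ] E2) (u : E2) :
    B u = u 0 • B (EuclideanSpace.single 0 1) + u 1 • B (EuclideanSpace.single 1 1) := by
  conv_lhs => rw [coords u]
  simp [map_add]

lemma dd_map (B : E2 →L[ℝ] E2) (u w : E2) :
    dd (B u) (B w)
      = dd (B (EuclideanSpace.single 0 1)) (B (EuclideanSpace.single 1 1)) * dd u w := by
  rw [apply_coord B u, apply_coord B w]
  simp only [dd, PiLp.add_apply, PiLp.smul_apply, smul_eq_mul]
  ring

lemma det_eq (B : E2 →L[ℝ] E2) :
    LinearMap.det (B : E2 →ₗ[ℝ] E2)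
      = dd (B (EuclideanSpace.single 0 1)) (B (EuclideanSpace.single 1 1)) := by
  classical
  set b := (EuclideanSpace.basisFun (Fin 2) ℝ).toBasis
  rw [← LinearMap.det_toMatrix b, Matrix.det_fin_two]
  have hb : ∀ j : Fin 2, b j = EuclideanSpace.single j 1 := by
    intro j
    simp [b, EuclideanSpace.basisFun_apply]
  have hr : ∀ (x : E2) (i : Fin 2), b.repr x i = x i := by
    intro x i
    simp [b]
  simp only [LinearMap.toMatrix_apply, hb, hr, ContinuousLinearMap.coe_coe, dd]
  ring

lemma smin_nonneg (B : E2 →L[ℝ] E2) : 0 ≤ sminCLM B := by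
  apply Real.sInf_nonneg
  rintro r ⟨x, hx, rfl⟩
  positivity

lemma smin_le (B : E2 →L[ℝ] E2) {x : E2} (hx : ‖x‖ = 1) : sminCLM B ≤ ‖B x‖ := by
  apply csInf_le
  · exact ⟨0, by rintro r ⟨y, hy, rfl⟩; positivity⟩
  · exact ⟨x, hx, rfl⟩

lemma smin_mul_le (B : E2 →L[ℝ] E2) (u : E2) : sminCLM B * ‖u‖ ≤ ‖B u‖ := by
  rcases eq_or_ne u 0 with rfl | hu
  · simp
  · have hnu : (0:ℝ) < ‖u‖ := norm_pos_iff.mpr hu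
    have hx : ‖(‖u‖⁻¹ • u : E2)‖ = 1 := by
      rw [norm_smul, norm_inv, norm_norm, inv_mul_cancel₀ hnu.ne']
    have := smin_le B hx
    rw [map_smul, norm_smul, norm_inv, norm_norm] at this
    calc sminCLM B * ‖u‖ ≤ ‖u‖⁻¹ * ‖B u‖ * ‖u‖ := by
          exact mul_le_mul_of_nonneg_right this hnu.le
      _ = ‖B u‖ := by field_simp

lemma ne_of_dd_ne (p a b : E2) (h : dd (a - p) (b - p) ≠ 0) : a ≠ b := by
  rintro rfl
  exact h (by simp [dd]; ring)

/-- Lower bound on distance from a point to the line through `a`, `b`. -/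
lemma le_infDist (p a b : E2) (h : dd (a - p) (b - p) ≠ 0) :
    |dd (a - p) (b - p)| / dist a b ≤ Metric.infDist p (affineSpan ℝ {a, b} : Set E2) := by
  have hab : a ≠ b := ne_of_dd_ne p a b h
  have hS : (0:ℝ) < dist a b := dist_pos.mpr hab
  by_contra hlt
  push_neg at hlt
  have hne : (affineSpan ℝ {a, b} : Set E2).Nonempty :=
    ⟨a, left_mem_affineSpan_pair ℝ a b⟩
  rw [Metric.infDist_lt_iff hne] at hlt
  obtain ⟨q, hq, hqd⟩ := hlt
  -- q = r • (b - a) + a for some r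
  have hq' : (q - a) +ᵥ a ∈ affineSpan ℝ {a, b} := by
    simpa using hq
  rw [vadd_left_mem_affineSpan_pair] at hq'
  obtain ⟨r, hr⟩ := hq'
  -- coordinates
  have hq0 : q 0 = a 0 + r * (b 0 - a 0) := by
    have := congrArg (fun z : E2 => z 0) hr
    simp only [PiLp.smul_apply, PiLp.sub_apply, smul_eq_mul, vsub_eq_sub] at this
    linarith
  have hq1 : q 1 = a 1 + r * (b 1 - a 1) := by
    have := congrArg (fun z : E2 => z 1) hr
    simp only [PiLp.smul_apply, PiLp.sub_apply, smul_eq_mul, vsub_eq_sub] at this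
    linarith
  have hd2 : (dist p q) ^ 2 = (p 0 - q 0) ^ 2 + (p 1 - q 1) ^ 2 := by
    rw [dist_eq_norm, nsq]
    simp [PiLp.sub_apply]
  have hS2 : (dist a b) ^ 2 = (a 0 - b 0) ^ 2 + (a 1 - b 1) ^ 2 := by
    rw [dist_eq_norm, nsq]
    simp [PiLp.sub_apply]
  have hDD : dd (a - p) (b - p)
      = (a 0 - p 0) * (b 1 - p 1) - (a 1 - p 1) * (b 0 - p 0) := by
    simp [dd, PiLp.sub_apply]
  -- key: (dist p q * dist a b)^2 ≥ dd^2
  have hkey : (dd (a - p) (b - p)) ^ 2 ≤ (dist p q) ^ 2 * (dist a b) ^ 2 := by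
    rw [hd2, hS2, hDD, hq0, hq1]
    nlinarith [sq_nonneg ((p 0 - a 0) * (b 0 - a 0) + (p 1 - a 1) * (b 1 - a 1)
      - r * ((a 0 - b 0) ^ 2 + (a 1 - b 1) ^ 2))]
  have hqd' : dist p q * dist a b < |dd (a - p) (b - p)| := by
    have := (lt_div_iff₀ hS).mp hqd
    linarith
  have hXnn : 0 ≤ dist p q * dist a b := mul_nonneg dist_nonneg dist_nonneg
  have hsq : (dist p q * dist a b) ^ 2 < |dd (a - p) (b - p)| ^ 2 := by
    have := mul_self_lt_mul_self hXnn hqd'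
    simpa [sq] using this
  rw [sq_abs] at hsq
  nlinarith [hkey]

/-- Upper bound: distance to the line is at most `|dd| / dist a b`. -/
lemma infDist_le (p a b : E2) (hab : a ≠ b) :
    Metric.infDist p (affineSpan ℝ {a, b} : Set E2) * dist a b ≤ |dd (a - p) (b - p)| := by
  have hS : (0:ℝ) < dist a b := dist_pos.mpr hab
  have hS2 : (dist a b) ^ 2 = (a 0 - b 0) ^ 2 + (a 1 - b 1) ^ 2 := by
    rw [dist_eq_norm, nsq]; simp [PiLp.sub_apply]
  set s2 : ℝ := (a 0 - b 0) ^ 2 + (a 1 - b 1) ^ 2 with hs2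
  have hs2pos : 0 < s2 := by rw [← hS2]; positivity
  set t : ℝ := ((p 0 - a 0) * (b 0 - a 0) + (p 1 - a 1) * (b 1 - a 1)) / s2 with ht
  set q : E2 := t • (b - a) +ᵥ a with hqdef
  have hqmem : q ∈ (affineSpan ℝ {a, b} : Set E2) :=
    vadd_left_mem_affineSpan_pair.mpr ⟨t, rfl⟩
  have hle : Metric.infDist p (affineSpan ℝ {a, b} : Set E2) ≤ dist p q :=
    Metric.infDist_le_dist_of_mem hqmem
  have hq0 : q 0 = a 0 + t * (b 0 - a 0) := by
    simp [hqdef, PiLp.add_apply, PiLp.smul_apply, PiLp.sub_apply]; ring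
  have hq1 : q 1 = a 1 + t * (b 1 - a 1) := by
    simp [hqdef, PiLp.add_apply, PiLp.smul_apply, PiLp.sub_apply]; ring
  have hd2 : (dist p q) ^ 2 = (p 0 - q 0) ^ 2 + (p 1 - q 1) ^ 2 := by
    rw [dist_eq_norm, nsq]; simp [PiLp.sub_apply]
  have hDD : dd (a - p) (b - p)
      = (a 0 - p 0) * (b 1 - p 1) - (a 1 - p 1) * (b 0 - p 0) := by
    simp [dd, PiLp.sub_apply]
  have hkey : (dist p q) ^ 2 * (dist a b) ^ 2 = (dd (a - p) (b - p)) ^ 2 := by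
    rw [hd2, hS2, hDD, hq0, hq1, ht]
    field_simp
    ring
  have h1 : (dist p q * dist a b) ^ 2 = |dd (a - p) (b - p)| ^ 2 := by
    rw [mul_pow, hkey, sq_abs]
  have h2 : dist p q * dist a b = |dd (a - p) (b - p)| := by
    have hnn : 0 ≤ dist p q * dist a b := mul_nonneg dist_nonneg dist_nonneg
    nlinarith [abs_nonneg (dd (a - p) (b - p))]
  calc Metric.infDist p (affineSpan ℝ {a, b} : Set E2) * dist a b
      ≤ dist p q * dist a b := mul_le_mul_of_nonneg_right hle dist_nonneg
    _ = _ := h2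

lemma taylor_bound {Ω : Set E2} (hΩ : IsOpen Ω) {f : E2 → E2} (hf : ContDiffOn ℝ 2 f Ω)
    {s : Set E2} (hs : Convex ℝ s) (hsΩ : s ⊆ Ω) {M : ℝ}
    (hM : ∀ z ∈ s, ‖fderiv ℝ (fderiv ℝ f) z‖ ≤ M)
    {x y : E2} (hx : x ∈ s) (hy : y ∈ s) :
    ‖f y - f x - fderiv ℝ f x (y - x)‖ ≤ M / 2 * ‖y - x‖ ^ 2 := by
  have hfd : ∀ z ∈ Ω, DifferentiableAt ℝ f z := fun z hz =>
    ((hf.differentiableOn (by norm_num)) z hz).differentiableAt (hΩ.mem_nhds hz)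
  have hC1 : ContDiffOn ℝ 1 (fderiv ℝ f) Ω := hf.fderiv_of_isOpen hΩ (by norm_num)
  have hd2 : ∀ z ∈ Ω, DifferentiableAt ℝ (fderiv ℝ f) z := fun z hz =>
    ((hC1.differentiableOn one_ne_zero) z hz).differentiableAt (hΩ.mem_nhds hz)
  set A := fderiv ℝ f x with hA
  have lip : ∀ z ∈ s, ‖fderiv ℝ f z - A‖ ≤ M * ‖z - x‖ := by
    intro z hz
    exact Convex.norm_image_sub_le_of_norm_hasFDerivWithin_le
      (fun w hw => ((hd2 w (hsΩ hw)).hasFDerivAt).hasFDerivWithinAt)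
      hM hs hx hz
  set v := y - x with hv
  set γ : ℝ → E2 := fun t => x + t • v with hγ
  have hγmem : ∀ t ∈ Set.Icc (0:ℝ) 1, γ t ∈ s := fun t ht =>
    hs.add_smul_sub_mem hx hy ht
  set g : ℝ → E2 := fun t => f (γ t) - f x - t • (A v) with hg
  have hγd : ∀ t : ℝ, HasDerivAt γ v t := by
    intro t
    exact (((hasDerivAt_id t).smul_const v).const_add x).congr_deriv (one_smul ℝ v)
  have hgd : ∀ t ∈ Set.Icc (0:ℝ) 1, HasDerivAt g ((fderiv ℝ f (γ t) - A) v) t := by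
    intro t ht
    have h1 : HasDerivAt (fun u => f (γ u)) (fderiv ℝ f (γ t) v) t :=
      HasFDerivAt.comp_hasDerivAt t ((hfd (γ t) (hsΩ (hγmem t ht))).hasFDerivAt) (hγd t)
    have h2 : HasDerivAt (fun u : ℝ => u • (A v)) (A v) t := by
      simpa using (hasDerivAt_id t).smul_const (A v)
    have := (h1.sub_const (f x)).sub h2
    exact this
  have hcont : ContinuousOn g (Set.Icc (0:ℝ) 1) := fun t ht =>
    ((hgd t ht).continuousAt).continuousWithinAt
  set B : ℝ → ℝ := fun t => M * ‖v‖ ^ 2 / 2 * t ^ 2 with hB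
  have hBd : ∀ t : ℝ, HasDerivAt B (M * ‖v‖ ^ 2 * t) t := by
    intro t
    have := (hasDerivAt_pow 2 t).const_mul (M * ‖v‖ ^ 2 / 2)
    simpa [B] using this.congr_deriv (by ring)
  have bound : ∀ t ∈ Set.Ico (0:ℝ) 1, ‖(fderiv ℝ f (γ t) - A) v‖ ≤ M * ‖v‖ ^ 2 * t := by
    intro t ht
    have h1 : ‖fderiv ℝ f (γ t) - A‖ ≤ M * ‖γ t - x‖ :=
      lip (γ t) (hγmem t ⟨ht.1, ht.2.le⟩)
    have h2 : ‖γ t - x‖ = t * ‖v‖ := by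
      simp [γ, norm_smul, abs_of_nonneg ht.1]
    calc ‖(fderiv ℝ f (γ t) - A) v‖ ≤ ‖fderiv ℝ f (γ t) - A‖ * ‖v‖ :=
          ContinuousLinearMap.le_opNorm _ v
      _ ≤ M * ‖γ t - x‖ * ‖v‖ := mul_le_mul_of_nonneg_right h1 (norm_nonneg _)
      _ = M * ‖v‖ ^ 2 * t := by rw [h2]; ring
  have ha : ‖g 0‖ ≤ B 0 := by simp [g, B, γ]
  have := image_norm_le_of_norm_deriv_right_le_deriv_boundary hcont
    (fun t ht => (hgd t ⟨ht.1, ht.2.le⟩).hasDerivWithinAt) ha hBd bound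
    (Set.right_mem_Icc.mpr zero_le_one)
  have hg1 : g 1 = f y - f x - A v := by simp [g, γ, v]
  have hB1 : B 1 = M / 2 * ‖v‖ ^ 2 := by simp [B]; ring
  rw [hg1, hB1] at this
  exact this

end NoRev

open NoRev in
/-- Theorem on avoiding element reversal: if `f` is `C²` on `Ω` with
nonsingular, orientation-preserving Jacobian, `T ⊆ Ω` is a positively
oriented triangle with vertices `v₁ v₂ v₃`, `M` bounds `‖∇²f‖` on `T`, and
`σ_min(∇f(v₁))/M > 2 h asp(T)`, then the image triangle is not reversed. -/
theorem no_reversal_of_smin_gt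
    (Ω : Set E2) (hΩ : IsOpen Ω) (f : E2 → E2)
    (hf : ContDiffOn ℝ 2 f Ω)
    (hns : ∀ x ∈ Ω, 0 < LinearMap.det ((fderiv ℝ f x : E2 →L[ℝ] E2) : E2 →ₗ[ℝ] E2))
    (v₁ v₂ v₃ : E2)
    (hT : convexHull ℝ {v₁, v₂, v₃} ⊆ Ω)
    (horient : 0 < triDet v₁ v₂ v₃)
    (M : ℝ)
    (hM : ∀ x ∈ convexHull ℝ {v₁, v₂, v₃}, ‖fderiv ℝ (fderiv ℝ f) x‖ ≤ M)
    (hcond : sminCLM (fderiv ℝ f v₁) / M > 2 * maxSide v₁ v₂ v₃ * aspectRatio v₁ v₂ v₃) :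
    0 < triDet (f v₁) (f v₂) (f v₃) := by
  classical
  have hconv : Convex ℝ (convexHull ℝ ({v₁, v₂, v₃} : Set E2)) := convex_convexHull ℝ _
  have hv₁ : v₁ ∈ convexHull ℝ ({v₁, v₂, v₃} : Set E2) := subset_convexHull ℝ _ (by simp)
  have hv₂ : v₂ ∈ convexHull ℝ ({v₁, v₂, v₃} : Set E2) := subset_convexHull ℝ _ (by simp)
  have hv₃ : v₃ ∈ convexHull ℝ ({v₁, v₂, v₃} : Set E2) := subset_convexHull ℝ _ (by simp)
  set A := fderiv ℝ f v₁ with hA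
  set σ := sminCLM A with hσ
  set h := maxSide v₁ v₂ v₃ with hhdef
  set m := minAlt v₁ v₂ v₃ with hmdef
  set D := dd (v₂ - v₁) (v₃ - v₁) with hDdef
  have hDpos : 0 < D := horient
  have hdd2 : dd (v₁ - v₂) (v₃ - v₂) = -D := by
    simp only [hDdef, dd, PiLp.sub_apply]; ring
  have hdd3 : dd (v₁ - v₃) (v₂ - v₃) = D := by
    simp only [hDdef, dd, PiLp.sub_apply]; ring
  -- the three altitudes
  have hne23 : v₂ ≠ v₃ := ne_of_dd_ne v₁ v₂ v₃ hDpos.ne'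
  have hne13 : v₁ ≠ v₃ := ne_of_dd_ne v₂ v₁ v₃ (by rw [hdd2]; exact (neg_ne_zero.mpr hDpos.ne'))
  have hne12 : v₁ ≠ v₂ := ne_of_dd_ne v₃ v₁ v₂ (by rw [hdd3]; exact hDpos.ne')
  have halt1 : Metric.infDist v₁ (affineSpan ℝ {v₂, v₃} : Set E2) * dist v₂ v₃ ≤ D := by
    have := infDist_le v₁ v₂ v₃ hne23
    rwa [← hDdef, abs_of_pos hDpos] at this
  have halt2 : Metric.infDist v₂ (affineSpan ℝ {v₁, v₃} : Set E2) * dist v₁ v₃ ≤ D := by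
    have := infDist_le v₂ v₁ v₃ hne13
    rwa [hdd2, abs_neg, abs_of_pos hDpos] at this
  have halt3 : Metric.infDist v₃ (affineSpan ℝ {v₁, v₂} : Set E2) * dist v₁ v₂ ≤ D := by
    have := infDist_le v₃ v₁ v₂ hne12
    rwa [hdd3, abs_of_pos hDpos] at this
  -- m > 0
  have hl1 : D / dist v₂ v₃ ≤ Metric.infDist v₁ (affineSpan ℝ {v₂, v₃} : Set E2) := by
    have := le_infDist v₁ v₂ v₃ hDpos.ne'
    rwa [← hDdef, abs_of_pos hDpos] at this
  have hl2 : D / dist v₁ v₃ ≤ Metric.infDist v₂ (affineSpan ℝ {v₁, v₃} : Set E2) := by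
    have := le_infDist v₂ v₁ v₃ (by rw [hdd2]; exact neg_ne_zero.mpr hDpos.ne')
    rwa [hdd2, abs_neg, abs_of_pos hDpos] at this
  have hl3 : D / dist v₁ v₂ ≤ Metric.infDist v₃ (affineSpan ℝ {v₁, v₂} : Set E2) := by
    have := le_infDist v₃ v₁ v₂ (by rw [hdd3]; exact hDpos.ne')
    rwa [hdd3, abs_of_pos hDpos] at this
  have hmpos : 0 < m := by
    rw [hmdef, minAlt]
    exact lt_min (lt_of_lt_of_le (div_pos hDpos (dist_pos.mpr hne23)) hl1)
      (lt_min (lt_of_lt_of_le (div_pos hDpos (dist_pos.mpr hne13)) hl2)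
        (lt_of_lt_of_le (div_pos hDpos (dist_pos.mpr hne12)) hl3))
  -- m ≤ h
  have hmh : m ≤ h := by
    calc m ≤ Metric.infDist v₁ (affineSpan ℝ {v₂, v₃} : Set E2) := min_le_left _ _
      _ ≤ dist v₁ v₂ := Metric.infDist_le_dist_of_mem (left_mem_affineSpan_pair ℝ v₂ v₃)
      _ ≤ h := le_max_left _ _
  have hhpos : 0 < h := lt_of_lt_of_le hmpos hmh
  -- m * h ≤ D
  have e1 : m * dist v₂ v₃ ≤ D :=
    le_trans (mul_le_mul_of_nonneg_right
      (le_trans (min_le_left _ _) le_rfl) dist_nonneg) halt1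
  have e2 : m * dist v₁ v₃ ≤ D :=
    le_trans (mul_le_mul_of_nonneg_right
      (le_trans (min_le_right _ _) (le_trans (min_le_left _ _) le_rfl)) dist_nonneg) halt2
  have e3 : m * dist v₁ v₂ ≤ D :=
    le_trans (mul_le_mul_of_nonneg_right
      (le_trans (min_le_right _ _) (le_trans (min_le_right _ _) le_rfl)) dist_nonneg) halt3
  have hmhD : m * h ≤ D := by
    rw [hhdef, maxSide]
    rcases max_choice (dist v₁ v₂) (max (dist v₂ v₃) (dist v₁ v₃)) with hc | hc
    · rw [hc]; exact e3
    · rw [hc]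
      rcases max_choice (dist v₂ v₃) (dist v₁ v₃) with hc2 | hc2
      · rw [hc2]; exact e1
      · rw [hc2]; exact e2
  -- positivity of M and σ
  have hM0 : 0 ≤ M := le_trans (ContinuousLinearMap.opNorm_nonneg _) (hM v₁ hv₁)
  have hasp : aspectRatio v₁ v₂ v₃ = h / m := rfl
  have hMpos : 0 < M := by
    rcases hM0.lt_or_eq with h' | h'
    · exact h'
    · exfalso
      rw [← h', div_zero, hasp] at hcond
      have : 0 < 2 * h * (h / m) := by positivity
      linarith
  have hσM : (2 * h * (h / m)) * M < σ := by
    rw [hasp] at hcond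
    exact (lt_div_iff₀ hMpos).mp hcond
  have hσpos : 0 < σ := lt_of_le_of_lt (by positivity) hσM
  have key : 2 * M * h ^ 2 < σ * m := by
    have k2 := mul_lt_mul_of_pos_right hσM hmpos
    have k3 : 2 * h * (h / m) * M * m = 2 * M * h ^ 2 := by field_simp
    linarith [k3 ▸ k2]
  -- Taylor bounds
  have ht2 : ‖f v₂ - f v₁ - A (v₂ - v₁)‖ ≤ M / 2 * ‖v₂ - v₁‖ ^ 2 :=
    taylor_bound hΩ hf hconv hT hM hv₁ hv₂
  have ht3 : ‖f v₃ - f v₁ - A (v₃ - v₁)‖ ≤ M / 2 * ‖v₃ - v₁‖ ^ 2 :=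
    taylor_bound hΩ hf hconv hT hM hv₁ hv₃
  -- surjectivity of A
  have hinj : Function.Injective ((A : E2 →ₗ[ℝ] E2) : E2 → E2) := by
    intro u w huw
    have h0 : A (u - w) = 0 := by
      rw [map_sub]
      change (A : E2 →ₗ[ℝ] E2) u - (A : E2 →ₗ[ℝ] E2) w = 0
      rw [huw, sub_self]
    have := smin_mul_le A (u - w)
    rw [h0, norm_zero] at this
    have hz : ‖u - w‖ ≤ 0 := le_of_mul_le_mul_left (by simpa using this) hσpos
    exact sub_eq_zero.mp (norm_eq_zero.mp (le_antisymm hz (norm_nonneg _)))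
  have hsurj := LinearMap.injective_iff_surjective.mp hinj
  obtain ⟨u₂, hu₂⟩ := hsurj (f v₂ - f v₁)
  obtain ⟨u₃, hu₃⟩ := hsurj (f v₃ - f v₁)
  have hu₂' : A u₂ = f v₂ - f v₁ := hu₂
  have hu₃' : A u₃ = f v₃ - f v₁ := hu₃
  -- perturbations
  set r := (M / 2 * h ^ 2) / σ with hrdef
  have hr0 : 0 ≤ r := by positivity
  have hrσ : r * σ = M / 2 * h ^ 2 := div_mul_cancel₀ _ hσpos.ne'
  set s₂ := u₂ - (v₂ - v₁) with hs₂def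
  set s₃ := u₃ - (v₃ - v₁) with hs₃def
  have hside2 : ‖v₂ - v₁‖ ≤ h := by
    rw [← dist_eq_norm, dist_comm]
    exact le_max_left _ _
  have hside3 : ‖v₃ - v₁‖ ≤ h := by
    rw [← dist_eq_norm, dist_comm]
    exact le_trans (le_max_right _ _) (le_max_right _ _)
  have hns₂ : ‖s₂‖ ≤ r := by
    have hAe : A s₂ = f v₂ - f v₁ - A (v₂ - v₁) := by
      rw [hs₂def, map_sub, hu₂']
    have h1 := smin_mul_le A s₂
    rw [hAe] at h1
    have h2 : ‖f v₂ - f v₁ - A (v₂ - v₁)‖ ≤ M / 2 * h ^ 2 := by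
      refine le_trans ht2 ?_
      have h3 : ‖v₂ - v₁‖ ^ 2 ≤ h ^ 2 := pow_le_pow_left₀ (norm_nonneg _) hside2 2
      have h4 : (0:ℝ) ≤ M / 2 := by positivity
      exact mul_le_mul_of_nonneg_left h3 h4
    rw [hrdef, le_div_iff₀ hσpos]
    calc ‖s₂‖ * σ = σ * ‖s₂‖ := mul_comm _ _
      _ ≤ ‖f v₂ - f v₁ - A (v₂ - v₁)‖ := h1
      _ ≤ M / 2 * h ^ 2 := h2
  have hns₃ : ‖s₃‖ ≤ r := by
    have hAe : A s₃ = f v₃ - f v₁ - A (v₃ - v₁) := by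
      rw [hs₃def, map_sub, hu₃']
    have h1 := smin_mul_le A s₃
    rw [hAe] at h1
    have h2 : ‖f v₃ - f v₁ - A (v₃ - v₁)‖ ≤ M / 2 * h ^ 2 := by
      refine le_trans ht3 ?_
      have h3 : ‖v₃ - v₁‖ ^ 2 ≤ h ^ 2 := pow_le_pow_left₀ (norm_nonneg _) hside3 2
      have h4 : (0:ℝ) ≤ M / 2 := by positivity
      exact mul_le_mul_of_nonneg_left h3 h4
    rw [hrdef, le_div_iff₀ hσpos]
    calc ‖s₃‖ * σ = σ * ‖s₃‖ := mul_comm _ _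
      _ ≤ ‖f v₃ - f v₁ - A (v₃ - v₁)‖ := h1
      _ ≤ M / 2 * h ^ 2 := h2
  -- decomposition of the image determinant
  have himg : triDet (f v₁) (f v₂) (f v₃)
      = LinearMap.det ((A : E2 →L[ℝ] E2) : E2 →ₗ[ℝ] E2) * dd u₂ u₃ := by
    have h0 : triDet (f v₁) (f v₂) (f v₃) = dd (f v₂ - f v₁) (f v₃ - f v₁) := rfl
    rw [h0, ← hu₂', ← hu₃', dd_map, ← det_eq]
  have hdet : 0 < LinearMap.det ((A : E2 →L[ℝ] E2) : E2 →ₗ[ℝ] E2) := hns v₁ (hT hv₁)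
  have hu2e : u₂ = (v₂ - v₁) + s₂ := by rw [hs₂def]; abel
  have hu3e : u₃ = (v₃ - v₁) + s₃ := by rw [hs₃def]; abel
  have hexp : dd u₂ u₃ = D + dd (v₂ - v₁) s₃ + dd s₂ (v₃ - v₁) + dd s₂ s₃ := by
    rw [hu2e, hu3e]
    simp only [hDdef, dd, PiLp.add_apply]
    ring
  have b1 : |dd (v₂ - v₁) s₃| ≤ h * r :=
    le_trans (abs_dd_le _ _) (mul_le_mul hside2 hns₃ (norm_nonneg _) hhpos.le)
  have b2 : |dd s₂ (v₃ - v₁)| ≤ r * h :=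
    le_trans (abs_dd_le _ _) (mul_le_mul hns₂ hside3 (norm_nonneg _) hr0)
  have b3 : |dd s₂ s₃| ≤ r * r :=
    le_trans (abs_dd_le _ _) (mul_le_mul hns₂ hns₃ (norm_nonneg _) hr0)
  have h4r : 4 * r < m := by
    have hstep : (4 * r) * σ < m * σ := by
      have : 4 * (r * σ) = 2 * (2 * (r * σ)) := by ring
      nlinarith [hrσ, key]
    exact lt_of_mul_lt_mul_right hstep hσpos.le
  have hrh : r < h := by linarith
  have hmain : 0 < dd u₂ u₃ := by
    rw [hexp]
    have a1 := (abs_le.mp b1).1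
    have a2 := (abs_le.mp b2).1
    have a3 := (abs_le.mp b3).1
    have p1 : 4 * r * h < m * h := by
      have := mul_lt_mul_of_pos_right h4r hhpos
      linarith
    have p2 : r * r ≤ r * h := mul_le_mul_of_nonneg_left hrh.le hr0
    have p3 : (0:ℝ) ≤ r * h := mul_nonneg hr0 hhpos.le
    have hc : h * r = r * h := mul_comm h r
    have hcm : m * h = h * m := mul_comm m h
    linarith [hmhD, a1, a2, a3, p1, p2, p3]
  rw [himg]
  exact mul_pos hdet hmain

end
end

section
/- Let T be a triangle in ℝ² with vertices v₁, v₂, v₃ in positive orientation, and let A = (v₂ − v₁, v₃ − v₁) be the 2×2 matrix with those columns. Then the smallest singular value of A satisfies σ_min(A) ≥ minalt(T)/√2, where minalt(T) is the minimum altitude length of T. -/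
noncomputable section

/-- Smallest singular value of a 2×2 real matrix (with the Euclidean norm). -/
def sminMat (A : Matrix (Fin 2) (Fin 2) ℝ) : ℝ :=
  sInf {r : ℝ | ∃ x : EuclideanSpace ℝ (Fin 2), ‖x‖ = 1 ∧ r = ‖Matrix.toEuclideanLin A x‖}

lemma norm_e2_sq (w : E2) : ‖w‖ ^ 2 = w 0 ^ 2 + w 1 ^ 2 := by
  rw [EuclideanSpace.norm_eq]
  rw [Real.sq_sqrt (by positivity)]
  simp [Fin.sum_univ_two, sq_abs]

lemma infDist_aux (p q r : E2) (t : ℝ) :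
    Metric.infDist p (affineSpan ℝ {q, r} : Set E2) ≤
      ‖p - (AffineMap.lineMap q r t)‖ := by
  have hmem : (AffineMap.lineMap q r t : E2) ∈ (affineSpan ℝ {q, r} : Set E2) :=
    AffineMap.lineMap_mem_affineSpan_pair t q r
  have h : Metric.infDist p (affineSpan ℝ {q, r} : Set E2) ≤
      dist p (AffineMap.lineMap q r t : E2) := Metric.infDist_le_dist_of_mem hmem
  rwa [dist_eq_norm] at h

lemma coord_aux (p q r : E2) (t : ℝ) (i : Fin 2) :
    (p - (AffineMap.lineMap q r t : E2)) i = (p - q) i - t * ((r - q) i) := by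
  simp only [AffineMap.lineMap_apply, vsub_eq_sub, vadd_eq_add, PiLp.sub_apply,
    PiLp.add_apply, PiLp.smul_apply, smul_eq_mul]
  ring

set_option maxHeartbeats 2000000 in
/-- For a positively oriented triangle with vertices `v₁ v₂ v₃`, the matrix
`A = (v₂ − v₁, v₃ − v₁)` (with these vectors as columns) satisfies
`σ_min(A) ≥ minalt(T)/√2`. -/
theorem smin_ge_minAlt_div_sqrt_two
    (v₁ v₂ v₃ : E2)
    (horient : 0 < triDet v₁ v₂ v₃) :
    sminMat (Matrix.of ![![(v₂ - v₁) 0, (v₃ - v₁) 0], ![(v₂ - v₁) 1, (v₃ - v₁) 1]]) ≥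
      minAlt v₁ v₂ v₃ / Real.sqrt 2 := by
  set a0 : ℝ := (v₂ - v₁) 0 with ha0
  set a1 : ℝ := (v₂ - v₁) 1 with ha1
  set b0 : ℝ := (v₃ - v₁) 0 with hb0
  set b1 : ℝ := (v₃ - v₁) 1 with hb1
  set A : Matrix (Fin 2) (Fin 2) ℝ := Matrix.of ![![a0, b0], ![a1, b1]] with hA
  have hd : 0 < a0 * b1 - a1 * b0 := horient
  clear_value a0 a1 b0 b1
  have hna : 0 < a0 ^ 2 + a1 ^ 2 := by
    nlinarith [sq_nonneg (a0*b0 + a1*b1), sq_nonneg b0, sq_nonneg b1, sq_nonneg a0,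
      sq_nonneg a1, mul_pos hd hd]
  have hnb : 0 < b0 ^ 2 + b1 ^ 2 := by
    nlinarith [sq_nonneg (a0*b0 + a1*b1), sq_nonneg b0, sq_nonneg b1, sq_nonneg a0,
      sq_nonneg a1, mul_pos hd hd]
  have hnasq : ‖v₂ - v₁‖ ^ 2 = a0 ^ 2 + a1 ^ 2 := by rw [ha0, ha1]; exact norm_e2_sq _
  have hnbsq : ‖v₃ - v₁‖ ^ 2 = b0 ^ 2 + b1 ^ 2 := by rw [hb0, hb1]; exact norm_e2_sq _
  have hnapos : 0 < ‖v₂ - v₁‖ := by nlinarith [norm_nonneg (v₂ - v₁)]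
  have hnbpos : 0 < ‖v₃ - v₁‖ := by nlinarith [norm_nonneg (v₃ - v₁)]
  -- altitude from v₂ to line v₁ v₃
  have alt2 : Metric.infDist v₂ (affineSpan ℝ {v₁, v₃} : Set E2) * ‖v₃ - v₁‖ ≤
      a0 * b1 - a1 * b0 := by
    set t : ℝ := (a0 * b0 + a1 * b1) / (b0 ^ 2 + b1 ^ 2) with ht
    have h1 := infDist_aux v₂ v₁ v₃ t
    have hn : ‖v₂ - (AffineMap.lineMap v₁ v₃ t : E2)‖ ^ 2
        = (a0 - t * b0) ^ 2 + (a1 - t * b1) ^ 2 := by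
      rw [norm_e2_sq, coord_aux, coord_aux, ha0, ha1, hb0, hb1]
    have hval : ((a0 - t * b0) ^ 2 + (a1 - t * b1) ^ 2) * (b0 ^ 2 + b1 ^ 2)
        = (a0 * b1 - a1 * b0) ^ 2 := by
      rw [ht]; field_simp; ring
    have hnorm : ‖v₂ - (AffineMap.lineMap v₁ v₃ t : E2)‖ * ‖v₃ - v₁‖ = a0 * b1 - a1 * b0 := by
      have hsq : (‖v₂ - (AffineMap.lineMap v₁ v₃ t : E2)‖ * ‖v₃ - v₁‖) ^ 2
          = (a0 * b1 - a1 * b0) ^ 2 := by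
        rw [mul_pow, hn, hnbsq, hval]
      nlinarith [mul_nonneg (norm_nonneg (v₂ - (AffineMap.lineMap v₁ v₃ t : E2)))
        (norm_nonneg (v₃ - v₁))]
    calc Metric.infDist v₂ (affineSpan ℝ {v₁, v₃} : Set E2) * ‖v₃ - v₁‖
        ≤ ‖v₂ - (AffineMap.lineMap v₁ v₃ t : E2)‖ * ‖v₃ - v₁‖ :=
          mul_le_mul_of_nonneg_right h1 hnbpos.le
      _ = a0 * b1 - a1 * b0 := hnorm
  -- altitude from v₃ to line v₁ v₂
  have alt3 : Metric.infDist v₃ (affineSpan ℝ {v₁, v₂} : Set E2) * ‖v₂ - v₁‖ ≤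
      a0 * b1 - a1 * b0 := by
    set t : ℝ := (a0 * b0 + a1 * b1) / (a0 ^ 2 + a1 ^ 2) with ht
    have h1 := infDist_aux v₃ v₁ v₂ t
    have hn : ‖v₃ - (AffineMap.lineMap v₁ v₂ t : E2)‖ ^ 2
        = (b0 - t * a0) ^ 2 + (b1 - t * a1) ^ 2 := by
      rw [norm_e2_sq, coord_aux, coord_aux, ha0, ha1, hb0, hb1]
    have hval : ((b0 - t * a0) ^ 2 + (b1 - t * a1) ^ 2) * (a0 ^ 2 + a1 ^ 2)
        = (a0 * b1 - a1 * b0) ^ 2 := by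
      rw [ht]; field_simp; ring
    have hnorm : ‖v₃ - (AffineMap.lineMap v₁ v₂ t : E2)‖ * ‖v₂ - v₁‖ = a0 * b1 - a1 * b0 := by
      have hsq : (‖v₃ - (AffineMap.lineMap v₁ v₂ t : E2)‖ * ‖v₂ - v₁‖) ^ 2
          = (a0 * b1 - a1 * b0) ^ 2 := by
        rw [mul_pow, hn, hnasq, hval]
      nlinarith [mul_nonneg (norm_nonneg (v₃ - (AffineMap.lineMap v₁ v₂ t : E2)))
        (norm_nonneg (v₂ - v₁))]
    calc Metric.infDist v₃ (affineSpan ℝ {v₁, v₂} : Set E2) * ‖v₂ - v₁‖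
        ≤ ‖v₃ - (AffineMap.lineMap v₁ v₂ t : E2)‖ * ‖v₂ - v₁‖ :=
          mul_le_mul_of_nonneg_right h1 hnapos.le
      _ = a0 * b1 - a1 * b0 := hnorm
  set m : ℝ := minAlt v₁ v₂ v₃ with hm
  have hm2 : m ≤ Metric.infDist v₂ (affineSpan ℝ {v₁, v₃} : Set E2) := by
    rw [hm, minAlt]; exact le_trans (min_le_right _ _) (min_le_left _ _)
  have hm3 : m ≤ Metric.infDist v₃ (affineSpan ℝ {v₁, v₂} : Set E2) := by
    rw [hm, minAlt]; exact le_trans (min_le_right _ _) (min_le_right _ _)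
  clear_value m
  have hs2 : 0 < Real.sqrt 2 := by positivity
  have key : ∀ x : EuclideanSpace ℝ (Fin 2), ‖x‖ = 1 →
      m / Real.sqrt 2 ≤ ‖Matrix.toEuclideanLin A x‖ := by
    intro x hx
    set y : E2 := Matrix.toEuclideanLin A x with hy
    have hy0 : y 0 = a0 * x 0 + b0 * x 1 := by
      rw [hy, Matrix.toEuclideanLin_apply]
      simp [Matrix.mulVec, dotProduct, Fin.sum_univ_two, hA]
    have hy1 : y 1 = a1 * x 0 + b1 * x 1 := by
      rw [hy, Matrix.toEuclideanLin_apply]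
      simp [Matrix.mulVec, dotProduct, Fin.sum_univ_two, hA]
    clear_value y
    have hxsq : x 0 ^ 2 + x 1 ^ 2 = 1 := by
      have h := norm_e2_sq x
      rw [hx] at h; linarith
    have hysq : ‖y‖ ^ 2 = y 0 ^ 2 + y 1 ^ 2 := norm_e2_sq y
    have cb : (x 0 * (a0 * b1 - a1 * b0)) ^ 2 ≤ ‖y‖ ^ 2 * (b0 ^ 2 + b1 ^ 2) := by
      rw [hysq, hy0, hy1]
      nlinarith [sq_nonneg ((a0 * x 0 + b0 * x 1) * b0 + (a1 * x 0 + b1 * x 1) * b1)]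
    have ca : (x 1 * (a0 * b1 - a1 * b0)) ^ 2 ≤ ‖y‖ ^ 2 * (a0 ^ 2 + a1 ^ 2) := by
      rw [hysq, hy0, hy1]
      nlinarith [sq_nonneg ((a0 * x 0 + b0 * x 1) * a0 + (a1 * x 0 + b1 * x 1) * a1)]
    have cb' : |x 0| * (a0 * b1 - a1 * b0) ≤ ‖y‖ * ‖v₃ - v₁‖ := by
      have h1 : (|x 0| * (a0 * b1 - a1 * b0)) ^ 2 ≤ (‖y‖ * ‖v₃ - v₁‖) ^ 2 := by
        rw [mul_pow, mul_pow, sq_abs, hnbsq]; rw [mul_pow] at cb; exact cb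
      nlinarith [mul_nonneg (norm_nonneg y) (norm_nonneg (v₃ - v₁)),
        mul_nonneg (abs_nonneg (x 0)) hd.le]
    have ca' : |x 1| * (a0 * b1 - a1 * b0) ≤ ‖y‖ * ‖v₂ - v₁‖ := by
      have h1 : (|x 1| * (a0 * b1 - a1 * b0)) ^ 2 ≤ (‖y‖ * ‖v₂ - v₁‖) ^ 2 := by
        rw [mul_pow, mul_pow, sq_abs, hnasq]; rw [mul_pow] at ca; exact ca
      nlinarith [mul_nonneg (norm_nonneg y) (norm_nonneg (v₂ - v₁)),
        mul_nonneg (abs_nonneg (x 1)) hd.le]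
    have hmax : 1 / Real.sqrt 2 ≤ |x 0| ∨ 1 / Real.sqrt 2 ≤ |x 1| := by
      by_contra h
      push_neg at h
      obtain ⟨h1, h2⟩ := h
      have hh : (1 / Real.sqrt 2) * (1 / Real.sqrt 2) = 1 / 2 := by
        rw [div_mul_div_comm, one_mul, Real.mul_self_sqrt (by norm_num)]
      have k1 : |x 0| * |x 0| < 1 / 2 := by
        calc |x 0| * |x 0| < (1 / Real.sqrt 2) * (1 / Real.sqrt 2) :=
            mul_self_lt_mul_self (abs_nonneg _) h1
          _ = 1 / 2 := hh
      have k2 : |x 1| * |x 1| < 1 / 2 := by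
        calc |x 1| * |x 1| < (1 / Real.sqrt 2) * (1 / Real.sqrt 2) :=
            mul_self_lt_mul_self (abs_nonneg _) h2
          _ = 1 / 2 := hh
      have q1 : x 0 ^ 2 < 1 / 2 := by rw [sq, ← abs_mul_abs_self]; exact k1
      have q2 : x 1 ^ 2 < 1 / 2 := by rw [sq, ← abs_mul_abs_self]; exact k2
      linarith
    rcases hmax with h | h
    · rw [div_le_iff₀ hs2]
      have e1 : m * ‖v₃ - v₁‖ ≤ a0 * b1 - a1 * b0 :=
        le_trans (mul_le_mul_of_nonneg_right hm2 hnbpos.le) alt2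
      have e2 : a0 * b1 - a1 * b0 ≤ Real.sqrt 2 * (|x 0| * (a0 * b1 - a1 * b0)) := by
        have hx2 : 1 ≤ Real.sqrt 2 * |x 0| := by
          rw [div_le_iff₀ hs2] at h; linarith
        calc a0 * b1 - a1 * b0 = 1 * (a0 * b1 - a1 * b0) := (one_mul _).symm
          _ ≤ (Real.sqrt 2 * |x 0|) * (a0 * b1 - a1 * b0) :=
              mul_le_mul_of_nonneg_right hx2 hd.le
          _ = Real.sqrt 2 * (|x 0| * (a0 * b1 - a1 * b0)) := mul_assoc _ _ _
      have e3 : Real.sqrt 2 * (|x 0| * (a0 * b1 - a1 * b0)) ≤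
          Real.sqrt 2 * (‖y‖ * ‖v₃ - v₁‖) := mul_le_mul_of_nonneg_left cb' hs2.le
      have e5 : Real.sqrt 2 * (‖y‖ * ‖v₃ - v₁‖) = (‖y‖ * Real.sqrt 2) * ‖v₃ - v₁‖ := by ring
      have e4 : m * ‖v₃ - v₁‖ ≤ (‖y‖ * Real.sqrt 2) * ‖v₃ - v₁‖ := by linarith
      exact le_of_mul_le_mul_right e4 hnbpos
    · rw [div_le_iff₀ hs2]
      have e1 : m * ‖v₂ - v₁‖ ≤ a0 * b1 - a1 * b0 :=
        le_trans (mul_le_mul_of_nonneg_right hm3 hnapos.le) alt3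
      have e2 : a0 * b1 - a1 * b0 ≤ Real.sqrt 2 * (|x 1| * (a0 * b1 - a1 * b0)) := by
        have hx2 : 1 ≤ Real.sqrt 2 * |x 1| := by
          rw [div_le_iff₀ hs2] at h; linarith
        calc a0 * b1 - a1 * b0 = 1 * (a0 * b1 - a1 * b0) := (one_mul _).symm
          _ ≤ (Real.sqrt 2 * |x 1|) * (a0 * b1 - a1 * b0) :=
              mul_le_mul_of_nonneg_right hx2 hd.le
          _ = Real.sqrt 2 * (|x 1| * (a0 * b1 - a1 * b0)) := mul_assoc _ _ _
      have e3 : Real.sqrt 2 * (|x 1| * (a0 * b1 - a1 * b0)) ≤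
          Real.sqrt 2 * (‖y‖ * ‖v₂ - v₁‖) := mul_le_mul_of_nonneg_left ca' hs2.le
      have e5 : Real.sqrt 2 * (‖y‖ * ‖v₂ - v₁‖) = (‖y‖ * Real.sqrt 2) * ‖v₂ - v₁‖ := by ring
      have e4 : m * ‖v₂ - v₁‖ ≤ (‖y‖ * Real.sqrt 2) * ‖v₂ - v₁‖ := by linarith
      exact le_of_mul_le_mul_right e4 hnapos
  rw [ge_iff_le, sminMat]
  apply le_csInf
  · exact ⟨‖Matrix.toEuclideanLin A (EuclideanSpace.single 0 1)‖,
      EuclideanSpace.single 0 1, by simp, rfl⟩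
  · rintro r ⟨x, hx, rfl⟩
    exact key x hx

end
end

section
/- With a = (cos θ − rs)/(1−r²), b = (rs − r² cos θ)/(1−r²), c = sin θ/(1−r²), d = −r² sin θ/(1−r²), and 0 < r ≤ s < 1, the minimum over the annulus r ≤ √(x²+y²) ≤ 1 of the Jacobian determinant a² + c² − (b²+d²)/(x²+y²)² of the map φ(x,y) = (Ax+By, −Bx+Ay) (with A = a + b/(x²+y²), B = c + d/(x²+y²)) is attained at x²+y² = r², and this minimum is nonpositive if and only if 2r cos θ − r²s − s ≤ 0. Equivalently, φ is orientation-preserving on the whole annulus if and only if 2r cos θ > r²s + s. -/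
/-- For the continuum-FEMWARP annulus map with constants determined by the
boundary conditions, the Jacobian determinant `a² + c² − (b²+d²)/(x²+y²)²` is
minimized over the annulus at `x²+y² = r²`; its minimum is nonpositive iff
`2r cos θ − r²s − s ≤ 0`; equivalently the map is orientation-preserving on
the whole annulus iff `2r cos θ > r²s + s`. -/
theorem annulus_reversal_criterion
    (r s θ : ℝ) (hr : 0 < r) (hrs : r ≤ s) (hs1 : s < 1) :
    let a := (Real.cos θ - r * s) / (1 - r ^ 2)
    let b := (r * s - r ^ 2 * Real.cos θ) / (1 - r ^ 2)
    let c := Real.sin θ / (1 - r ^ 2)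
    let d := -(r ^ 2 * Real.sin θ) / (1 - r ^ 2)
    let J : ℝ × ℝ → ℝ := fun p =>
      a ^ 2 + c ^ 2 - (b ^ 2 + d ^ 2) / (p.1 ^ 2 + p.2 ^ 2) ^ 2
    let Ann : Set (ℝ × ℝ) := {p | r ≤ Real.sqrt (p.1 ^ 2 + p.2 ^ 2) ∧
      Real.sqrt (p.1 ^ 2 + p.2 ^ 2) ≤ 1}
    -- the minimum is attained where `x² + y² = r²`:
    (∀ p ∈ Ann, a ^ 2 + c ^ 2 - (b ^ 2 + d ^ 2) / (r ^ 2) ^ 2 ≤ J p) ∧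
    (∀ p ∈ Ann, p.1 ^ 2 + p.2 ^ 2 = r ^ 2 →
      J p = a ^ 2 + c ^ 2 - (b ^ 2 + d ^ 2) / (r ^ 2) ^ 2) ∧
    -- the minimum is nonpositive iff `2r cos θ − r²s − s ≤ 0`:
    (a ^ 2 + c ^ 2 - (b ^ 2 + d ^ 2) / (r ^ 2) ^ 2 ≤ 0 ↔
      2 * r * Real.cos θ - r ^ 2 * s - s ≤ 0) ∧
    -- equivalently, orientation preservation on the whole annulus:
    ((∀ p ∈ Ann, 0 < J p) ↔ 2 * r * Real.cos θ > r ^ 2 * s + s) := by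
  have hr1 : r < 1 := lt_of_le_of_lt hrs hs1
  have hden : (0:ℝ) < 1 - r ^ 2 := by nlinarith
  have hs0 : 0 < s := lt_of_lt_of_le hr hrs
  intro a b c d J Ann
  have hbd : 0 ≤ b ^ 2 + d ^ 2 := by positivity
  have key : ∀ p ∈ Ann, r ^ 2 ≤ p.1 ^ 2 + p.2 ^ 2 := by
    rintro ⟨x, y⟩ ⟨h1, h2⟩
    have hq := Real.sq_sqrt (by positivity : (0:ℝ) ≤ x ^ 2 + y ^ 2)
    simp only at h1 hq
    nlinarith [Real.sqrt_nonneg (x ^ 2 + y ^ 2)]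
  have part1 : ∀ p ∈ Ann, a ^ 2 + c ^ 2 - (b ^ 2 + d ^ 2) / (r ^ 2) ^ 2 ≤ J p := by
    intro p hp
    have hu := key p hp
    have hru : (0:ℝ) < r ^ 2 := by positivity
    simp only [J]
    gcongr a ^ 2 + c ^ 2 - (b ^ 2 + d ^ 2) / ?_
    nlinarith
  have part2 : ∀ p ∈ Ann, p.1 ^ 2 + p.2 ^ 2 = r ^ 2 →
      J p = a ^ 2 + c ^ 2 - (b ^ 2 + d ^ 2) / (r ^ 2) ^ 2 := by
    intro p _ h
    simp only [J, h]
  have hid : a ^ 2 + c ^ 2 - (b ^ 2 + d ^ 2) / (r ^ 2) ^ 2 =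
      s * (2 * r * Real.cos θ - r ^ 2 * s - s) / (r ^ 2 * (1 - r ^ 2)) := by
    simp only [a, b, c, d]
    field_simp
    ring
  have hpos : (0:ℝ) < r ^ 2 * (1 - r ^ 2) := by positivity
  have part3 : a ^ 2 + c ^ 2 - (b ^ 2 + d ^ 2) / (r ^ 2) ^ 2 ≤ 0 ↔
      2 * r * Real.cos θ - r ^ 2 * s - s ≤ 0 := by
    rw [hid, div_nonpos_iff]
    constructor
    · rintro (⟨h1, h2⟩ | ⟨h1, h2⟩)
      · nlinarith
      · nlinarith
    · intro h
      exact Or.inr ⟨by nlinarith, hpos.le⟩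
  refine ⟨part1, part2, part3, ?_, ?_⟩
  · intro h
    have hmem : ((r, 0) : ℝ × ℝ) ∈ Ann := by
      refine ⟨by simp [Real.sqrt_sq hr.le], by simp [Real.sqrt_sq hr.le]; linarith⟩
    have hJ := h _ hmem
    have hJeq := part2 _ hmem (by simp)
    rw [hJeq] at hJ
    by_contra hcon
    push_neg at hcon
    have := part3.mpr (by linarith)
    linarith
  · intro h p hp
    have hm : ¬ (a ^ 2 + c ^ 2 - (b ^ 2 + d ^ 2) / (r ^ 2) ^ 2 ≤ 0) := by
      rw [part3]; linarith
    push_neg at hm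
    exact lt_of_lt_of_le hm (part1 p hp)
end

section
/- Let f: Ω → ℝ² be C² with ∇f nonsingular and orientation-preserving on Ω, and suppose T_h is a family of triangles in Ω with maximum side length h → 0 and aspect ratios uniformly bounded by κ. Then there exists h₀ > 0 such that for all h < h₀, the image triangle (with vertices f(v₁), f(v₂), f(v₃)) of every positively oriented T ∈ T_h is positively oriented. -/
noncomputable section

def det2 (a b : E2) : ℝ := a 0 * b 1 - a 1 * b 0

lemma sq_norm2 (x : E2) : ‖x‖ ^ 2 = x 0 ^ 2 + x 1 ^ 2 := by
  rw [EuclideanSpace.norm_eq, Real.sq_sqrt (by positivity)]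
  simp [Fin.sum_univ_two, sq_abs]

lemma sub_app (a b : E2) (i : Fin 2) : (a - b) i = a i - b i := rfl

lemma det2_abs_le (a b : E2) : |det2 a b| ≤ ‖a‖ * ‖b‖ := by
  have h : det2 a b ^ 2 ≤ (‖a‖ * ‖b‖) ^ 2 := by
    have := sq_norm2 a; have := sq_norm2 b
    have key : det2 a b ^ 2 ≤ (a 0 ^ 2 + a 1 ^ 2) * (b 0 ^ 2 + b 1 ^ 2) := by
      simp only [det2]; nlinarith [sq_nonneg (a 0 * b 0 + a 1 * b 1)]
    calc det2 a b ^ 2 ≤ (a 0 ^ 2 + a 1 ^ 2) * (b 0 ^ 2 + b 1 ^ 2) := key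
      _ = (‖a‖ * ‖b‖) ^ 2 := by rw [mul_pow]; rw [sq_norm2, sq_norm2]
  calc |det2 a b| = Real.sqrt (det2 a b ^ 2) := (Real.sqrt_sq_eq_abs _).symm
    _ ≤ Real.sqrt ((‖a‖ * ‖b‖) ^ 2) := Real.sqrt_le_sqrt h
    _ = ‖a‖ * ‖b‖ := Real.sqrt_sq (by positivity)

lemma baseHeight (p₁ p₂ p₃ : E2) (h12 : p₁ ≠ p₂) :
    Metric.infDist p₃ (affineSpan ℝ {p₁, p₂} : Set E2) * dist p₁ p₂
      ≤ |det2 (p₂ - p₁) (p₃ - p₁)| := by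
  set u : E2 := p₂ - p₁ with hu
  set w : E2 := p₃ - p₁ with hw
  have hun : ‖u‖ ≠ 0 := by
    simpa [hu, sub_eq_zero] using fun h => h12 h.symm
  have hn : (0:ℝ) < u 0 ^ 2 + u 1 ^ 2 := by
    rw [← sq_norm2]
    positivity
  set t : ℝ := (w 0 * u 0 + w 1 * u 1) / (u 0 ^ 2 + u 1 ^ 2) with ht
  set q : E2 := AffineMap.lineMap p₁ p₂ t with hq
  have hqmem : q ∈ (affineSpan ℝ {p₁, p₂} : Set E2) :=
    AffineMap.lineMap_mem_affineSpan_pair t p₁ p₂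
  have h1 : Metric.infDist p₃ (affineSpan ℝ {p₁, p₂} : Set E2) ≤ dist p₃ q :=
    Metric.infDist_le_dist_of_mem hqmem
  have hq' : p₃ - q = w - t • u := by
    rw [hq, AffineMap.lineMap_apply]
    simp only [vsub_eq_sub, vadd_eq_add, hw, hu]
    abel
  have hd3q : dist p₃ q = ‖w - t • u‖ := by rw [dist_eq_norm, hq']
  have hd12 : dist p₁ p₂ = ‖u‖ := by rw [dist_eq_norm, hu, norm_sub_rev]
  have hsq : (dist p₃ q * dist p₁ p₂) ^ 2 = det2 u w ^ 2 := by
    rw [hd3q, hd12, mul_pow, sq_norm2, sq_norm2]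
    have e0 : (w - t • u) 0 = w 0 - t * u 0 := rfl
    have e1 : (w - t • u) 1 = w 1 - t * u 1 := rfl
    rw [e0, e1, ht]
    simp only [det2]
    field_simp
    ring
  have heq : dist p₃ q * dist p₁ p₂ = |det2 u w| := by
    calc dist p₃ q * dist p₁ p₂ = Real.sqrt ((dist p₃ q * dist p₁ p₂) ^ 2) :=
          (Real.sqrt_sq (by positivity)).symm
      _ = Real.sqrt (det2 u w ^ 2) := by rw [hsq]
      _ = |det2 u w| := Real.sqrt_sq_eq_abs _
  exact le_trans (mul_le_mul_of_nonneg_right h1 dist_nonneg) heq.le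

lemma taylor_aux {Ω : Set E2} (hΩ : IsOpen Ω) {f : E2 → E2} (hf : ContDiffOn ℝ 2 f Ω)
    {M : ℝ} {x y : E2} (hseg : segment ℝ x y ⊆ Ω)
    (hM : ∀ z ∈ segment ℝ x y, ‖fderiv ℝ (fderiv ℝ f) z‖ ≤ M) :
    ‖f y - f x - fderiv ℝ f x (y - x)‖ ≤ M * ‖y - x‖ ^ 2 := by
  set g := fderiv ℝ f with hg
  have hM0 : 0 ≤ M := le_trans (norm_nonneg (fderiv ℝ (fderiv ℝ f) x)) (hM x (left_mem_segment ℝ x y))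
  have hgdiff : DifferentiableOn ℝ g Ω :=
    (hf.fderiv_of_isOpen (m := 1) hΩ (by norm_num)).differentiableOn one_ne_zero
  have hfdiff : DifferentiableOn ℝ f Ω := hf.differentiableOn (by norm_num)
  have hzx : ∀ z ∈ segment ℝ x y, ‖z - x‖ ≤ ‖y - x‖ := by
    intro z hz
    rw [segment_eq_image'] at hz
    obtain ⟨θ, ⟨h0, h1⟩, rfl⟩ := hz
    rw [add_sub_cancel_left, norm_smul, Real.norm_eq_abs, abs_of_nonneg h0]
    nlinarith [norm_nonneg (y - x)]
  have hlip : ∀ z ∈ segment ℝ x y, ‖g z - g x‖ ≤ M * ‖z - x‖ := by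
    intro z hz
    exact Convex.norm_image_sub_le_of_norm_fderiv_le
      (fun w hw => hgdiff.differentiableAt (hΩ.mem_nhds (hseg hw)))
      (fun w hw => hM w hw) (convex_segment x y) (left_mem_segment ℝ x y) hz
  set F : E2 → E2 := fun z => f z - g x z with hF
  have hFderiv : ∀ z ∈ segment ℝ x y, fderiv ℝ F z = g z - g x := by
    intro z hz
    rw [hF]
    rw [fderiv_fun_sub (hfdiff.differentiableAt (hΩ.mem_nhds (hseg hz)))
      ((g x).differentiableAt)]
    rw [(g x).fderiv]
  have hbound : ∀ z ∈ segment ℝ x y, ‖fderiv ℝ F z‖ ≤ M * ‖y - x‖ := by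
    intro z hz
    rw [hFderiv z hz]
    exact le_trans (hlip z hz) (mul_le_mul_of_nonneg_left (hzx z hz) hM0)
  have hmain : ‖F y - F x‖ ≤ M * ‖y - x‖ * ‖y - x‖ :=
    Convex.norm_image_sub_le_of_norm_fderiv_le
      (fun w hw => DifferentiableAt.sub
        (hfdiff.differentiableAt (hΩ.mem_nhds (hseg hw))) ((g x).differentiableAt))
      hbound (convex_segment x y) (left_mem_segment ℝ x y) (right_mem_segment ℝ x y)
  have hFyx : F y - F x = f y - f x - g x (y - x) := by
    rw [hF]
    simp only [map_sub]
    abel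
  rw [hFyx] at hmain
  calc ‖f y - f x - g x (y - x)‖ ≤ M * ‖y - x‖ * ‖y - x‖ := hmain
    _ = M * ‖y - x‖ ^ 2 := by ring

lemma E2_decomp (x : E2) :
    x = x 0 • EuclideanSpace.single 0 1 + x 1 • EuclideanSpace.single 1 1 := by
  ext i
  fin_cases i <;> simp [EuclideanSpace.single_apply]

lemma det2_clm (A : E2 →L[ℝ] E2) (a b : E2) :
    det2 (A a) (A b) = LinearMap.det ((A : E2 →L[ℝ] E2) : E2 →ₗ[ℝ] E2) * det2 a b := by
  have hdet : LinearMap.det ((A : E2 →L[ℝ] E2) : E2 →ₗ[ℝ] E2)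
      = A (EuclideanSpace.single 0 1) 0 * A (EuclideanSpace.single 1 1) 1
        - A (EuclideanSpace.single 0 1) 1 * A (EuclideanSpace.single 1 1) 0 := by
    rw [← LinearMap.det_toMatrix (EuclideanSpace.basisFun (Fin 2) ℝ).toBasis, Matrix.det_fin_two]
    simp [LinearMap.toMatrix_apply]
    ring
  have happ : ∀ (x : E2) (i : Fin 2), A x i
      = x 0 * A (EuclideanSpace.single 0 1) i + x 1 * A (EuclideanSpace.single 1 1) i := by
    intro x i
    conv_lhs => rw [E2_decomp x]
    rw [map_add, map_smul, map_smul]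
    rfl
  simp only [det2]
  rw [happ a 0, happ a 1, happ b 0, happ b 1, hdet]
  ring

lemma det2_expand (x y e e' : E2) :
    det2 (x + e) (y + e') = det2 x y + det2 x e' + det2 e y + det2 e e' := by
  simp only [det2]
  have h : ∀ (a b : E2) (i : Fin 2), (a + b) i = a i + b i := fun _ _ _ => rfl
  simp only [h]
  ring

lemma minAlt_le₁ (v₁ v₂ v₃ : E2) :
    minAlt v₁ v₂ v₃ ≤ Metric.infDist v₁ (affineSpan ℝ {v₂, v₃} : Set E2) := min_le_left _ _

lemma minAlt_le₂ (v₁ v₂ v₃ : E2) :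
    minAlt v₁ v₂ v₃ ≤ Metric.infDist v₂ (affineSpan ℝ {v₁, v₃} : Set E2) :=
  le_trans (min_le_right _ _) (min_le_left _ _)

lemma minAlt_le₃ (v₁ v₂ v₃ : E2) :
    minAlt v₁ v₂ v₃ ≤ Metric.infDist v₃ (affineSpan ℝ {v₁, v₂} : Set E2) :=
  le_trans (min_le_right _ _) (min_le_right _ _)

lemma vertex_ne {v₁ v₂ v₃ : E2} (h : 0 < minAlt v₁ v₂ v₃) :
    v₁ ≠ v₂ ∧ v₂ ≠ v₃ ∧ v₁ ≠ v₃ := by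
  refine ⟨fun he => ?_, fun he => ?_, fun he => ?_⟩
  · have h0 : Metric.infDist v₂ (affineSpan ℝ {v₁, v₃} : Set E2) = 0 :=
      Metric.infDist_zero_of_mem
        (subset_affineSpan ℝ _ (by rw [← he]; exact Set.mem_insert _ _))
    exact absurd (lt_of_lt_of_le h ((minAlt_le₂ v₁ v₂ v₃).trans_eq h0)) (lt_irrefl 0)
  · have h0 : Metric.infDist v₂ (affineSpan ℝ {v₁, v₃} : Set E2) = 0 :=
      Metric.infDist_zero_of_mem
        (subset_affineSpan ℝ _ (by rw [he]; exact Set.mem_insert_of_mem _ rfl))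
    exact absurd (lt_of_lt_of_le h ((minAlt_le₂ v₁ v₂ v₃).trans_eq h0)) (lt_irrefl 0)
  · have h0 : Metric.infDist v₃ (affineSpan ℝ {v₁, v₂} : Set E2) = 0 :=
      Metric.infDist_zero_of_mem
        (subset_affineSpan ℝ _ (by rw [← he]; exact Set.mem_insert _ _))
    exact absurd (lt_of_lt_of_le h ((minAlt_le₃ v₁ v₂ v₃).trans_eq h0)) (lt_irrefl 0)
lemma triDet_lower {v₁ v₂ v₃ : E2} (h : 0 < minAlt v₁ v₂ v₃) :
    minAlt v₁ v₂ v₃ * maxSide v₁ v₂ v₃ ≤ |triDet v₁ v₂ v₃| := by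
  obtain ⟨h12, h23, h13⟩ := vertex_ne h
  have b3 := baseHeight v₁ v₂ v₃ h12
  have b1 := baseHeight v₂ v₃ v₁ h23
  have b2 := baseHeight v₃ v₁ v₂ (Ne.symm h13)
  have e1 : det2 (v₃ - v₂) (v₁ - v₂) = triDet v₁ v₂ v₃ := by
    simp only [det2, triDet, sub_app]; ring
  have e2 : det2 (v₁ - v₃) (v₂ - v₃) = triDet v₁ v₂ v₃ := by
    simp only [det2, triDet, sub_app]; ring
  have e3 : det2 (v₂ - v₁) (v₃ - v₁) = triDet v₁ v₂ v₃ := rfl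
  rw [Set.pair_comm v₃ v₁, dist_comm v₃ v₁, e2] at b2
  rw [e1] at b1
  rw [e3] at b3
  have key : ∀ d : ℝ, (d = dist v₁ v₂ ∨ d = dist v₂ v₃ ∨ d = dist v₁ v₃) →
      minAlt v₁ v₂ v₃ * d ≤ |triDet v₁ v₂ v₃| := by
    rintro d (rfl | rfl | rfl)
    · exact le_trans (mul_le_mul_of_nonneg_right (minAlt_le₃ v₁ v₂ v₃) dist_nonneg) b3
    · exact le_trans (mul_le_mul_of_nonneg_right (minAlt_le₁ v₁ v₂ v₃) dist_nonneg) b1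
    · exact le_trans (mul_le_mul_of_nonneg_right (minAlt_le₂ v₁ v₂ v₃) dist_nonneg) b2
  unfold maxSide
  rcases max_choice (dist v₁ v₂) (max (dist v₂ v₃) (dist v₁ v₃)) with hm | hm <;> rw [hm]
  · exact key _ (Or.inl rfl)
  · rcases max_choice (dist v₂ v₃) (dist v₁ v₃) with hm2 | hm2 <;> rw [hm2]
    · exact key _ (Or.inr (Or.inl rfl))
    · exact key _ (Or.inr (Or.inr rfl))

set_option maxHeartbeats 1000000 in
/-- No Type 2 reversals on sufficiently refined meshes of bounded aspect
ratio: if `f` is `C²` with nonsingular orientation-preserving Jacobian on an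
open set `Ω` and the triangles lie in a compact subset `K ⊆ Ω`, then for any
aspect-ratio bound `κ` there is `h₀ > 0` such that every positively oriented
nondegenerate triangle in `K` with maximum side length below `h₀` and aspect
ratio at most `κ` has a positively oriented image under `f`. -/
theorem no_type2_reversals_for_refined_meshes
    (Ω : Set E2) (hΩ : IsOpen Ω) (K : Set E2) (hK : IsCompact K) (hKΩ : K ⊆ Ω)
    (f : E2 → E2) (hf : ContDiffOn ℝ 2 f Ω)
    (hdet : ∀ x ∈ Ω, 0 < LinearMap.det ((fderiv ℝ f x : E2 →L[ℝ] E2) : E2 →ₗ[ℝ] E2))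
    (κ : ℝ) (hκ : 0 < κ) :
    ∃ h₀ : ℝ, 0 < h₀ ∧
      ∀ v₁ v₂ v₃ : E2,
        convexHull ℝ {v₁, v₂, v₃} ⊆ K →
        0 < triDet v₁ v₂ v₃ →
        0 < minAlt v₁ v₂ v₃ →
        maxSide v₁ v₂ v₃ < h₀ →
        aspectRatio v₁ v₂ v₃ ≤ κ →
        0 < triDet (f v₁) (f v₂) (f v₃) := by
  by_cases hne : K.Nonempty
  · have hcont1 : ContinuousOn (fderiv ℝ f) Ω :=
      hf.continuousOn_fderiv_of_isOpen hΩ (by norm_num)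
    have hg1 : ContDiffOn ℝ 1 (fderiv ℝ f) Ω := hf.fderiv_of_isOpen hΩ (by norm_num)
    have hcont2 : ContinuousOn (fderiv ℝ (fderiv ℝ f)) Ω :=
      hg1.continuousOn_fderiv_of_isOpen hΩ (le_refl 1)
    obtain ⟨L', hL'⟩ := hK.exists_bound_of_continuousOn (hcont1.mono hKΩ)
    obtain ⟨M', hM'⟩ := hK.exists_bound_of_continuousOn (f := fderiv ℝ (fderiv ℝ f)) (hcont2.mono hKΩ)
    set L := max L' 0 with hLdef
    set M := max M' 0 with hMdef
    have hL0 : (0:ℝ) ≤ L := le_max_right _ _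
    have hM0 : (0:ℝ) ≤ M := le_max_right _ _
    have hφ : ContinuousOn
        (fun x => LinearMap.det ((fderiv ℝ f x : E2 →L[ℝ] E2) : E2 →ₗ[ℝ] E2)) Ω :=
      ContinuousLinearMap.continuous_det.comp_continuousOn hcont1
    obtain ⟨x₀, hx₀K, hx₀min⟩ := hK.exists_isMinOn hne (hφ.mono hKΩ)
    set σ := LinearMap.det ((fderiv ℝ f x₀ : E2 →L[ℝ] E2) : E2 →ₗ[ℝ] E2) with hσdef
    have hσ : 0 < σ := hdet x₀ (hKΩ hx₀K)
    set C := κ * (2 * L * M + M * M) + 1 with hCdef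
    have hC0 : (0:ℝ) < C := by
      have : (0:ℝ) ≤ κ * (2 * L * M + M * M) := by positivity
      linarith
    refine ⟨min 1 (σ / C), by positivity, ?_⟩
    intro v₁ v₂ v₃ hsub hD hα hs hAR
    obtain ⟨h12, h23, h13⟩ := vertex_ne hα
    set s := maxSide v₁ v₂ v₃ with hsdef
    set α := minAlt v₁ v₂ v₃ with hαdef
    have hs1 : s < 1 := lt_of_lt_of_le hs (min_le_left _ _)
    have hsC : s < σ / C := lt_of_lt_of_le hs (min_le_right _ _)
    have hd12 : dist v₁ v₂ ≤ s := le_max_left _ _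
    have hd13 : dist v₁ v₃ ≤ s := le_trans (le_max_right _ _) (le_max_right _ _)
    have hs0 : 0 < s := lt_of_lt_of_le (dist_pos.mpr h12) hd12
    have hsκα : s ≤ κ * α := by
      have h := hAR
      rw [aspectRatio, ← hsdef, ← hαdef, div_le_iff₀ hα] at h
      linarith [h]
    have hvK : ∀ v ∈ ({v₁, v₂, v₃} : Set E2), v ∈ K := fun v hv =>
      hsub (subset_convexHull ℝ _ hv)
    have hv₁K : v₁ ∈ K := hvK v₁ (Set.mem_insert _ _)
    have hseg2 : segment ℝ v₁ v₂ ⊆ K := by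
      rw [← convexHull_pair]
      refine le_trans (convexHull_mono ?_) hsub
      exact Set.insert_subset_insert (Set.singleton_subset_iff.mpr (Set.mem_insert _ _))
    have hseg3 : segment ℝ v₁ v₃ ⊆ K := by
      rw [← convexHull_pair]
      refine le_trans (convexHull_mono ?_) hsub
      exact Set.insert_subset_insert
        (Set.singleton_subset_iff.mpr (Set.mem_insert_of_mem _ rfl))
    have hMseg : ∀ {a b : E2}, segment ℝ a b ⊆ K →
        ∀ z ∈ segment ℝ a b, ‖fderiv ℝ (fderiv ℝ f) z‖ ≤ M := by
      intro a b hsub' z hz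
      exact le_trans (hM' z (hsub' hz)) (le_max_left _ _)
    set A := fderiv ℝ f v₁ with hAdef
    set e₂ := f v₂ - f v₁ - A (v₂ - v₁) with he₂
    set e₃ := f v₃ - f v₁ - A (v₃ - v₁) with he₃
    have hn2 : ‖v₂ - v₁‖ ≤ s := by rw [← dist_eq_norm, dist_comm]; exact hd12
    have hn3 : ‖v₃ - v₁‖ ≤ s := by rw [← dist_eq_norm, dist_comm]; exact hd13
    have hbe₂ : ‖e₂‖ ≤ M * s ^ 2 := by
      have ht := taylor_aux hΩ hf (fun z hz => hKΩ (hseg2 hz)) (hMseg hseg2)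
      refine le_trans ht ?_
      have : ‖v₂ - v₁‖ ^ 2 ≤ s ^ 2 := pow_le_pow_left₀ (norm_nonneg _) hn2 2
      exact mul_le_mul_of_nonneg_left this hM0
    have hbe₃ : ‖e₃‖ ≤ M * s ^ 2 := by
      have ht := taylor_aux hΩ hf (fun z hz => hKΩ (hseg3 hz)) (hMseg hseg3)
      refine le_trans ht ?_
      have : ‖v₃ - v₁‖ ^ 2 ≤ s ^ 2 := pow_le_pow_left₀ (norm_nonneg _) hn3 2
      exact mul_le_mul_of_nonneg_left this hM0
    have hAnorm : ‖A‖ ≤ L := le_trans (hL' v₁ hv₁K) (le_max_left _ _)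
    have hAa : ‖A (v₂ - v₁)‖ ≤ L * s :=
      le_trans (A.le_opNorm _) (mul_le_mul hAnorm hn2 (norm_nonneg _) hL0)
    have hAb : ‖A (v₃ - v₁)‖ ≤ L * s :=
      le_trans (A.le_opNorm _) (mul_le_mul hAnorm hn3 (norm_nonneg _) hL0)
    set σ₁ := LinearMap.det ((A : E2 →L[ℝ] E2) : E2 →ₗ[ℝ] E2) with hσ₁def
    set R := det2 (A (v₂ - v₁)) e₃ + det2 e₂ (A (v₃ - v₁)) + det2 e₂ e₃ with hRdef
    have himg : triDet (f v₁) (f v₂) (f v₃) = σ₁ * triDet v₁ v₂ v₃ + R := by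
      have h2 : f v₂ - f v₁ = A (v₂ - v₁) + e₂ := by rw [he₂]; abel
      have h3 : f v₃ - f v₁ = A (v₃ - v₁) + e₃ := by rw [he₃]; abel
      have heq : triDet (f v₁) (f v₂) (f v₃) = det2 (f v₂ - f v₁) (f v₃ - f v₁) := rfl
      have heq2 : det2 (v₂ - v₁) (v₃ - v₁) = triDet v₁ v₂ v₃ := rfl
      rw [heq, h2, h3, det2_expand, det2_clm, heq2, hRdef, hσ₁def]
      ring
    have hσ₁lb : σ ≤ σ₁ := hx₀min hv₁K
    have hDlb : α * s ≤ triDet v₁ v₂ v₃ := by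
      have h := triDet_lower hα
      rwa [abs_of_pos hD, ← hsdef, ← hαdef] at h
    have hRbound : |R| ≤ 2 * L * M * s ^ 3 + M * M * s ^ 4 := by
      have t1 : |det2 (A (v₂ - v₁)) e₃| ≤ (L * s) * (M * s ^ 2) :=
        le_trans (det2_abs_le _ _)
          (mul_le_mul hAa hbe₃ (norm_nonneg _) (by positivity))
      have t2 : |det2 e₂ (A (v₃ - v₁))| ≤ (M * s ^ 2) * (L * s) :=
        le_trans (det2_abs_le _ _)
          (mul_le_mul hbe₂ hAb (norm_nonneg _) (by positivity))
      have t3 : |det2 e₂ e₃| ≤ (M * s ^ 2) * (M * s ^ 2) :=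
        le_trans (det2_abs_le _ _)
          (mul_le_mul hbe₂ hbe₃ (norm_nonneg _) (by positivity))
      calc |R| ≤ |det2 (A (v₂ - v₁)) e₃ + det2 e₂ (A (v₃ - v₁))| + |det2 e₂ e₃| :=
            abs_add_le _ _
        _ ≤ |det2 (A (v₂ - v₁)) e₃| + |det2 e₂ (A (v₃ - v₁))| + |det2 e₂ e₃| := by
            linarith [abs_add_le (det2 (A (v₂ - v₁)) e₃) (det2 e₂ (A (v₃ - v₁)))]
        _ ≤ (L * s) * (M * s ^ 2) + (M * s ^ 2) * (L * s) + (M * s ^ 2) * (M * s ^ 2) := by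
            linarith
        _ = 2 * L * M * s ^ 3 + M * M * s ^ 4 := by ring
    have hsCmul : s * C < σ := (lt_div_iff₀ hC0).mp hsC
    have hRσ : 2 * L * M * s ^ 3 + M * M * s ^ 4 < σ * (s * s / κ) := by
      have hrw : σ * (s * s / κ) = σ * s * s / κ := by ring
      rw [hrw, lt_div_iff₀ hκ]
      have hmul : s * C * (s * s) < σ * (s * s) :=
        mul_lt_mul_of_pos_right hsCmul (mul_pos hs0 hs0)
      have hs43 : s ^ 4 ≤ s ^ 3 := pow_le_pow_of_le_one hs0.le hs1.le (by norm_num)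
      rw [hCdef] at hmul
      have key1 : κ * (2 * L * M * s ^ 3 + M * M * s ^ 4)
          ≤ κ * (2 * L * M * s ^ 3 + M * M * s ^ 3) :=
        mul_le_mul_of_nonneg_left
          (add_le_add_right (mul_le_mul_of_nonneg_left hs43 (mul_nonneg hM0 hM0)) _) hκ.le
      have key2 : s * (κ * (2 * L * M + M * M) + 1) * (s * s)
          = κ * (2 * L * M * s ^ 3 + M * M * s ^ 3) + s ^ 3 := by ring
      have key3 : (0:ℝ) < s ^ 3 := pow_pos hs0 3
      linarith
    have hchain : σ * (s * s / κ) ≤ σ * (α * s) := by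
      apply mul_le_mul_of_nonneg_left _ hσ.le
      rw [div_le_iff₀ hκ]
      nlinarith [mul_le_mul_of_nonneg_left hsκα hs0.le]
    have hchain2 : σ * (α * s) ≤ σ₁ * triDet v₁ v₂ v₃ := by
      apply mul_le_mul hσ₁lb hDlb (by positivity) (le_trans hσ.le hσ₁lb)
    rw [himg]
    have hnegR := neg_abs_le R
    linarith
  · refine ⟨1, one_pos, ?_⟩
    intro v₁ v₂ v₃ hsub _ _ _ _
    exact absurd ⟨v₁, hsub (subset_convexHull ℝ _ (Set.mem_insert _ _))⟩ hne


end
end
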